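/- arXiv:1309.3243 — 5 statements merged into one kernel-verified Lean document; each statement's English description precedes it below -/
import Mathlib

section
/- Let (μ_t)_{t≥0} be the solution of the measure-valued evolution equation with mating, natural death and competition death, and set M(t) = μ_t(F). In the case of semi-random mating: if inf_z D(z) ≥ sup_z p(z), then the population becomes extinct, i.e. lim_{t→∞} M(t) = 0; if sup_z D(z) < inf_z p(z), then the population is persistent, i.e. liminf_{t→∞} M(t) > 0 whenever M(0) > 0. In the case of assortative mating the same conclusions hold with sup_z p(z) and inf_z p(z) replaced by 1. -/
open MeasureTheory Filter ENNReal

noncomputable section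

/-- Semi-random mating rate: `m(x,y;μ) = p(x)p(y) / ∫ p dμ`. -/
def semiRandomRate {E : Type*} [MeasurableSpace E] (p : E → ℝ) :
    E → E → Measure E → ℝ :=
  fun x y μ => p x * p y / ∫ z, p z ∂μ

/-- Assortative mating rate. -/
def assortativeRate {E : Type*} [MeasurableSpace E] (a : E → E → ℝ) :
    E → E → Measure E → ℝ :=
  fun x y μ => a x y / (2 * ∫ r, a x r ∂μ) + a x y / (2 * ∫ r, a y r ∂μ)

/-- Mild (integrated) form of the measure-valued evolution equation. -/
def IsMildSolution {E : Type*} [MeasurableSpace E] (F : Set E)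
    (m : E → E → Measure E → ℝ) (K : E → E → Measure E)
    (D I : E → ℝ) (U : E → E → ℝ)
    (μ₀ : Measure E) (μ : ℝ → Measure E) : Prop :=
  μ 0 = μ₀ ∧
  (∀ t : ℝ, 0 ≤ t → IsFiniteMeasure (μ t) ∧ μ t Fᶜ = 0) ∧
  ∀ f : E → ℝ, Measurable f → (∃ Cf : ℝ, ∀ x, |f x| ≤ Cf) →
    ∀ t : ℝ, 0 ≤ t →
      (∫ x, f x ∂(μ t)) = (∫ x, f x ∂μ₀)
        + ∫ s in (0:ℝ)..t,
            ((∫ x, ∫ y, m x y (μ s) * ∫ z, f z ∂(K x y) ∂(μ s) ∂(μ s))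
              - ∫ x, f x * (D x + I x * ∫ y, U x y ∂(μ s)) ∂(μ s))


open Set ProbabilityTheory

section AuxHelpers



private lemma abstract_good (G M : ℝ → ℝ) (c1 c2 : ℝ) (hc1 : 0 ≤ c1) (hc2 : 0 ≤ c2)
    (h1 : ∀ t : ℝ, 0 ≤ t → M t = M 0 + ∫ s in (0:ℝ)..t, G s)
    (hM0 : ∀ s : ℝ, 0 ≤ s → 0 ≤ M s)
    (h4 : ∀ s : ℝ, 0 ≤ s → |G s| ≤ c2 * (1 + M s + M s ^ 2))
    (h3 : ∀ s : ℝ, 0 ≤ s → G s ≤ c1)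
    (h5 : ∀ t : ℝ, 0 ≤ t → ¬ IntervalIntegrable G volume 0 t →
        ∀ s, t ≤ s → M s = M 0 ∧ G s = G 0) :
    ∀ t : ℝ, 0 ≤ t → IntervalIntegrable G volume 0 t := by
  by_contra hcon
  push_neg at hcon
  obtain ⟨t₀, ht₀0, ht₀⟩ := hcon
  set B : Set ℝ := {t | 0 ≤ t ∧ ¬ IntervalIntegrable G volume 0 t} with hB
  have hBne : B.Nonempty := ⟨t₀, ht₀0, ht₀⟩
  have hBdd : BddBelow B := ⟨0, fun b hb => hb.1⟩
  set τ := sInf B with hτ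
  have hτ0 : 0 ≤ τ := le_csInf hBne fun b hb => hb.1
  have hup : ∀ s, τ < s → M s = M 0 ∧ G s = G 0 := by
    intro s hs
    obtain ⟨b, hbB, hbs⟩ := (csInf_lt_iff hBdd hBne).mp hs
    exact h5 b hbB.1 hbB.2 s hbs.le
  have hgoodlt : ∀ u, 0 ≤ u → u < τ → IntervalIntegrable G volume 0 u := by
    intro u hu0 huτ
    by_contra hbad
    exact absurd (csInf_le hBdd ⟨hu0, hbad⟩) (not_le.mpr huτ)
  set R := M 0 + c1 * τ with hR
  have hM00 : 0 ≤ M 0 := hM0 0 le_rfl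
  have hMb : ∀ s, 0 ≤ s → M s ≤ R := by
    intro s hs
    by_cases hII : IntervalIntegrable G volume 0 s
    · have hsτ : s ≤ τ := by
        by_contra hsτ
        push_neg at hsτ
        obtain ⟨b, hbB, hbs⟩ := (csInf_lt_iff hBdd hBne).mp hsτ
        have hsub : Set.uIcc (0:ℝ) b ⊆ Set.uIcc (0:ℝ) s := by
          rw [Set.uIcc_of_le hbB.1, Set.uIcc_of_le (hbB.1.trans hbs.le)]
          exact Set.Icc_subset_Icc le_rfl hbs.le
        exact hbB.2 (hII.mono_set hsub)
      have hint : (∫ σ in (0:ℝ)..s, G σ) ≤ ∫ σ in (0:ℝ)..s, c1 :=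
        intervalIntegral.integral_mono_on hs hII intervalIntegrable_const
          fun x hx => h3 x hx.1
      have hint2 : (∫ σ in (0:ℝ)..s, (c1:ℝ)) = (s - 0) • c1 := intervalIntegral.integral_const c1
      have := h1 s hs
      rw [this]
      have : c1 * s ≤ c1 * τ := mul_le_mul_of_nonneg_left hsτ hc1
      simp only [smul_eq_mul, sub_zero] at hint2
      nlinarith [hint, hint2]
    · rw [(h5 s hs hII s le_rfl).1]
      nlinarith [mul_nonneg hc1 hτ0]
  set Cb := c2 * (1 + R + R ^ 2) + |G 0| with hCb
  have hGb : ∀ s, 0 ≤ s → |G s| ≤ Cb := by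
    intro s hs
    have h4s := h4 s hs
    have hMs0 := hM0 s hs
    have hMsR := hMb s hs
    have hsq : M s ^ 2 ≤ R ^ 2 := pow_le_pow_left₀ hMs0 hMsR 2
    have hmono : c2 * (1 + M s + M s ^ 2) ≤ c2 * (1 + R + R ^ 2) :=
      mul_le_mul_of_nonneg_left (by linarith) hc2
    calc |G s| ≤ c2 * (1 + M s + M s ^ 2) := h4s
      _ ≤ c2 * (1 + R + R ^ 2) := hmono
      _ ≤ Cb := le_add_of_nonneg_right (abs_nonneg _)
  have hτt₀ : τ ≤ t₀ := csInf_le hBdd ⟨ht₀0, ht₀⟩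
  have hIoo : IntegrableOn G (Set.Ioo 0 τ) volume := by
    have hcover : Set.Ioo (0:ℝ) τ = ⋃ n : ℕ, Set.Ioc 0 (τ - 1/(n+1)) := by
      ext x
      simp only [Set.mem_Ioo, Set.mem_iUnion, Set.mem_Ioc]
      constructor
      · rintro ⟨hx0, hxτ⟩
        obtain ⟨n, hn⟩ := exists_nat_one_div_lt (show 0 < τ - x by linarith)
        exact ⟨n, hx0, by push_cast at hn ⊢; linarith⟩
      · rintro ⟨n, hx0, hxn⟩
        have : (0:ℝ) < 1/(n+1) := by positivity
        exact ⟨hx0, by linarith⟩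
    have haesm : AEStronglyMeasurable G (volume.restrict (Set.Ioo 0 τ)) := by
      rw [hcover]
      refine aestronglyMeasurable_iUnion_iff.mpr fun n => ?_
      rcases le_or_gt 0 (τ - 1/(n+1)) with h0 | h0
      · have hlt : τ - 1/(n+1) < τ := by
          have : (0:ℝ) < 1/(n+1) := by positivity
          linarith
        exact ((intervalIntegrable_iff_integrableOn_Ioc_of_le h0).mp
          (hgoodlt _ h0 hlt)).aestronglyMeasurable
      · rw [Set.Ioc_eq_empty (by intro h; exact absurd h (not_lt.mpr h0.le)), Measure.restrict_empty]
        exact aestronglyMeasurable_zero_measure G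
    refine Integrable.mono' (integrable_const Cb) haesm ?_
    refine (ae_restrict_mem measurableSet_Ioo).mono fun x hx => ?_
    rw [Real.norm_eq_abs]
    exact hGb x hx.1.le
  have hIcc : IntegrableOn G (Set.Icc τ t₀) volume := by
    have hne : ∀ᵐ x ∂(volume.restrict (Set.Icc τ t₀)), x ≠ τ := by
      refine ae_restrict_of_ae ?_
      rw [ae_iff]
      have hset : {x : ℝ | ¬ x ≠ τ} = {τ} := by ext x; simp
      rw [hset, Real.volume_singleton]
    have hmem : ∀ᵐ x ∂(volume.restrict (Set.Icc τ t₀)), x ∈ Set.Icc τ t₀ := ae_restrict_mem measurableSet_Icc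
    have heqae : (fun _ : ℝ => G 0) =ᵐ[volume.restrict (Set.Icc τ t₀)] G := by
      filter_upwards [hne, hmem] with x hx hxm
      exact ((hup x (lt_of_le_of_ne hxm.1 (Ne.symm hx))).2).symm
    exact (integrableOn_const measure_Icc_lt_top.ne).congr heqae
  have hfin : IntegrableOn G (Set.Ioc 0 t₀) volume := by
    refine ((hIoo.union hIcc).mono_set fun x hx => ?_)
    rcases lt_or_ge x τ with h | h
    · exact Or.inl ⟨hx.1, h⟩
    · exact Or.inr ⟨h, hx.2⟩
  exact ht₀ ((intervalIntegrable_iff_integrableOn_Ioc_of_le ht₀0).mpr hfin)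



private lemma split_int (G : ℝ → ℝ)
    (hgood : ∀ t : ℝ, 0 ≤ t → IntervalIntegrable G volume 0 t)
    {t₁ t : ℝ} (h0 : 0 ≤ t₁) (h : t₁ ≤ t) :
    (∫ s in (0:ℝ)..t, G s) = (∫ s in (0:ℝ)..t₁, G s) + ∫ s in t₁..t, G s := by
  have h2 : IntervalIntegrable G volume t₁ t := by
    refine (hgood t (h0.trans h)).mono_set ?_
    rw [Set.uIcc_of_le h, Set.uIcc_of_le (h0.trans h)]
    exact Set.Icc_subset_Icc h0 le_rfl
  exact (intervalIntegral.integral_add_adjacent_intervals (hgood t₁ h0) h2).symm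

private lemma abstract_ext (G M : ℝ → ℝ) (κ : ℝ) (hκ : 0 < κ)
    (h1 : ∀ t : ℝ, 0 ≤ t → M t = M 0 + ∫ s in (0:ℝ)..t, G s)
    (hM0 : ∀ s : ℝ, 0 ≤ s → 0 ≤ M s)
    (hneg : ∀ s : ℝ, 0 ≤ s → G s ≤ -(κ * M s ^ 2))
    (hgood : ∀ t : ℝ, 0 ≤ t → IntervalIntegrable G volume 0 t) :
    Tendsto M atTop (nhds 0) := by
  rw [Metric.tendsto_atTop]
  intro ε hε
  -- there is a time with M < ε
  have hex : ∃ t₁ : ℝ, 0 ≤ t₁ ∧ M t₁ < ε := by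
    by_contra hno
    push_neg at hno
    set T : ℝ := (M 0 + 1) / (κ * ε ^ 2) with hT
    have hden : 0 < κ * ε ^ 2 := by positivity
    have hM00 := hM0 0 le_rfl
    have hT0 : 0 ≤ T := div_nonneg (by linarith) hden.le
    have hb : ∀ x ∈ Set.Icc (0:ℝ) T, G x ≤ -(κ * ε ^ 2) := by
      intro x hx
      have h2 := hneg x hx.1
      have h3 := hno x hx.1
      have : κ * ε ^ 2 ≤ κ * M x ^ 2 := by
        have : ε ^ 2 ≤ M x ^ 2 := pow_le_pow_left₀ hε.le h3 2
        exact mul_le_mul_of_nonneg_left this hκ.le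
      linarith
    have hint : (∫ s in (0:ℝ)..T, G s) ≤ ∫ s in (0:ℝ)..T, -(κ * ε ^ 2) :=
      intervalIntegral.integral_mono_on hT0 (hgood T hT0) intervalIntegrable_const hb
    rw [intervalIntegral.integral_const] at hint
    have hMT := h1 T hT0
    have hMT0 := hM0 T hT0
    have hTval : (T - 0) • -(κ * ε ^ 2) = -(M 0 + 1) := by
      rw [smul_eq_mul, sub_zero, hT]
      field_simp
    rw [hTval] at hint
    linarith
  obtain ⟨t₁, ht₁0, ht₁⟩ := hex
  refine ⟨t₁, fun t ht => ?_⟩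
  have ht0 : 0 ≤ t := ht₁0.trans ht
  have hsplit := split_int G hgood ht₁0 ht
  have hint : (∫ s in t₁..t, G s) ≤ 0 := by
    rw [intervalIntegral.integral_of_le ht]
    apply setIntegral_nonpos measurableSet_Ioc
    intro u hu
    have h2 := hneg u (ht₁0.trans hu.1.le)
    nlinarith [hM0 u (ht₁0.trans hu.1.le), sq_nonneg (M u)]
  have hMt := h1 t ht0
  have hMt₁ := h1 t₁ ht₁0
  rw [Real.dist_eq, sub_zero, abs_of_nonneg (hM0 t ht0)]
  rw [hMt, hsplit]
  linarith

set_option maxHeartbeats 2000000 in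
private lemma abstract_pers (G M : ℝ → ℝ) (δ C₁ C₂ pu : ℝ) (hδ : 0 < δ) (hC₁ : 0 < C₁)
    (hC₂ : 0 < C₂) (hpu : 0 < pu)
    (h1 : ∀ t : ℝ, 0 ≤ t → M t = M 0 + ∫ s in (0:ℝ)..t, G s)
    (hM0 : ∀ s : ℝ, 0 ≤ s → 0 ≤ M s)
    (hup : ∀ s : ℝ, 0 ≤ s → G s ≤ M s * (pu - C₁ * M s))
    (hlow : ∀ s : ℝ, 0 ≤ s → M s * (δ - C₂ * M s) ≤ G s)
    (hgood : ∀ t : ℝ, 0 ≤ t → IntervalIntegrable G volume 0 t)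
    (hM00 : 0 < M 0) :
    0 < liminf M atTop := by
  -- continuity of M on [0, T]
  have hcont : ∀ T : ℝ, 0 ≤ T → ContinuousOn M (Set.Icc 0 T) := by
    intro T hT
    have hint : IntegrableOn G (Set.Icc 0 T) volume := by
      rw [integrableOn_Icc_iff_integrableOn_Ioc]
      exact (intervalIntegrable_iff_integrableOn_Ioc_of_le hT).mp (hgood T hT)
    have hc := intervalIntegral.continuousOn_primitive hint
    have hc2 : ContinuousOn (fun x => M 0 + ∫ t in Set.Ioc 0 x, G t) (Set.Icc 0 T) :=
      continuousOn_const.add hc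
    exact hc2.congr fun x hx => by
      rw [h1 x hx.1, intervalIntegral.integral_of_le hx.1]
  -- global upper bound
  set R : ℝ := max (M 0) (pu / C₁) with hRdef
  have hR0 : 0 < R := lt_max_of_lt_left hM00
  have hub : ∀ t : ℝ, 0 ≤ t → M t ≤ R := by
    intro t₂ ht₂
    by_contra hgt
    push_neg at hgt
    set S : Set ℝ := Set.Icc 0 t₂ ∩ M ⁻¹' (Set.Iic R) with hS
    have hSc : IsClosed S :=
      (hcont t₂ ht₂).preimage_isClosed_of_isClosed isClosed_Icc isClosed_Iic
    have hSne : S.Nonempty := ⟨0, ⟨le_rfl, ht₂⟩, by simp only [Set.mem_preimage, Set.mem_Iic]; exact le_max_left _ _⟩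
    have hSbdd : BddAbove S := ⟨t₂, fun x hx => hx.1.2⟩
    set t₃ := sSup S with ht₃
    have ht₃S : t₃ ∈ S := hSc.csSup_mem hSne hSbdd
    have ht₃t₂ : t₃ ≤ t₂ := ht₃S.1.2
    have ht₃0 : 0 ≤ t₃ := ht₃S.1.1
    have habove : ∀ u, t₃ < u → u ≤ t₂ → R < M u := by
      intro u hu1 hu2
      by_contra hle
      push_neg at hle
      exact absurd (le_csSup hSbdd ⟨⟨ht₃0.trans hu1.le, hu2⟩, hle⟩) (not_le.mpr hu1)
    have hsplit := split_int G hgood ht₃0 ht₃t₂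
    have hneg2 : (∫ s in t₃..t₂, G s) ≤ 0 := by
      rw [intervalIntegral.integral_of_le ht₃t₂]
      apply setIntegral_nonpos measurableSet_Ioc
      intro u hu
      have hRu := habove u hu.1 hu.2
      have hMu0 : 0 < M u := hR0.trans hRu
      have : pu - C₁ * M u < 0 := by
        have : pu / C₁ ≤ R := le_max_right _ _
        have h2 : pu / C₁ < M u := this.trans_lt hRu
        have := (div_lt_iff₀ hC₁).mp h2
        linarith
      have := hup u (ht₃0.trans hu.1.le)
      nlinarith
    have := h1 t₂ ht₂
    have h2 := h1 t₃ ht₃0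
    have : M t₂ ≤ M t₃ := by rw [this, hsplit]; linarith
    exact absurd (this.trans ht₃S.2) (not_le.mpr hgt)
  -- lower bound
  set ε : ℝ := min (M 0) (δ / C₂) with hεdef
  have hε0 : 0 < ε := lt_min hM00 (by positivity)
  have hlb : ∀ t : ℝ, 0 ≤ t → ε / 2 ≤ M t := by
    intro t₂ ht₂
    by_contra hlt
    push_neg at hlt
    set S1 : Set ℝ := Set.Icc 0 t₂ ∩ M ⁻¹' (Set.Iic (ε/2)) with hS1
    have hS1c : IsClosed S1 :=
      (hcont t₂ ht₂).preimage_isClosed_of_isClosed isClosed_Icc isClosed_Iic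
    have hS1ne : S1.Nonempty := ⟨t₂, ⟨ht₂, le_rfl⟩, hlt.le⟩
    have hS1bdd : BddBelow S1 := ⟨0, fun x hx => hx.1.1⟩
    set ts : ℝ := sInf S1 with hts
    have htsS : ts ∈ S1 := hS1c.csInf_mem hS1ne hS1bdd
    have hts0 : 0 ≤ ts := htsS.1.1
    have htst₂ : ts ≤ t₂ := htsS.1.2
    have htsM : M ts ≤ ε / 2 := htsS.2
    have hts_pos : 0 < ts := by
      rcases eq_or_lt_of_le hts0 with h | h
      · exfalso
        rw [← h] at htsM
        have : ε ≤ M 0 := min_le_left _ _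
        linarith
      · exact h
    -- below ts, M > ε/2
    have hblw : ∀ u, 0 ≤ u → u < ts → ε / 2 < M u := by
      intro u hu0 huts
      by_contra hle
      push_neg at hle
      exact absurd (csInf_le hS1bdd ⟨⟨hu0, huts.le.trans htst₂⟩, hle⟩) (not_le.mpr huts)
    -- last time ≥ ε before ts
    set S2 : Set ℝ := Set.Icc 0 ts ∩ M ⁻¹' (Set.Ici ε) with hS2
    have hS2c : IsClosed S2 := by
      refine (ContinuousOn.preimage_isClosed_of_isClosed ?_ isClosed_Icc isClosed_Ici)
      exact (hcont t₂ ht₂).mono (Set.Icc_subset_Icc le_rfl htst₂)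
    have hS2ne : S2.Nonempty := ⟨0, ⟨le_rfl, hts0⟩, by simp only [Set.mem_preimage, Set.mem_Ici]; exact min_le_left _ _⟩
    have hS2bdd : BddAbove S2 := ⟨ts, fun x hx => hx.1.2⟩
    set t₄ := sSup S2 with ht₄
    have ht₄S : t₄ ∈ S2 := hS2c.csSup_mem hS2ne hS2bdd
    have ht₄0 : 0 ≤ t₄ := ht₄S.1.1
    have ht₄ts : t₄ ≤ ts := ht₄S.1.2
    have ht₄M : ε ≤ M t₄ := ht₄S.2
    have ht₄lt : t₄ < ts := by
      rcases eq_or_lt_of_le ht₄ts with h | h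
      · exfalso; rw [h] at ht₄M; linarith
      · exact h
    have hmid : ∀ u, t₄ < u → u < ts → ε / 2 < M u ∧ M u < ε := by
      intro u hu1 hu2
      refine ⟨hblw u (ht₄0.trans hu1.le) hu2, ?_⟩
      by_contra hle
      push_neg at hle
      exact absurd (le_csSup hS2bdd ⟨⟨ht₄0.trans hu1.le, hu2.le⟩, hle⟩) (not_le.mpr hu1)
    have hsplit := split_int G hgood ht₄0 ht₄ts
    have hpos2 : (0:ℝ) ≤ ∫ s in t₄..ts, G s := by
      rw [intervalIntegral.integral_of_le ht₄ts]
      apply setIntegral_nonneg measurableSet_Ioc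
      intro u hu
      have hu0 : 0 ≤ u := ht₄0.trans hu.1.le
      rcases eq_or_lt_of_le hu.2 with h | h
      · -- u = ts
        have hMu : 0 ≤ M u := hM0 u hu0
        have hMu2 : M u ≤ ε / 2 := by rw [h]; exact htsM
        have hεδ : ε ≤ δ / C₂ := min_le_right _ _
        have : 0 ≤ δ - C₂ * M u := by
          have : C₂ * M u ≤ C₂ * (ε/2) := mul_le_mul_of_nonneg_left hMu2 hC₂.le
          have h2 : C₂ * ε ≤ δ := by nlinarith [(le_div_iff₀ hC₂).mp hεδ]
          nlinarith
        have := hlow u hu0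
        nlinarith [hM0 u hu0]
      · have hm := hmid u hu.1 h
        have : 0 ≤ δ - C₂ * M u := by
          have hεδ : ε ≤ δ / C₂ := min_le_right _ _
          have h2 : C₂ * ε ≤ δ := by nlinarith [(le_div_iff₀ hC₂).mp hεδ]
          nlinarith [hm.2]
        have hl := hlow u hu0
        have hMu0 : 0 ≤ M u := hM0 u hu0
        nlinarith
    have h2 := h1 ts hts0
    have h3 := h1 t₄ ht₄0
    have : M t₄ ≤ M ts := by rw [h2, hsplit]; linarith
    linarith
  -- conclude
  have hbddabove : IsBoundedUnder (· ≤ ·) atTop M :=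
    ⟨R, eventually_map.mpr (by filter_upwards [eventually_ge_atTop (0:ℝ)] with t ht using hub t ht)⟩
  have hevent : ∀ᶠ t in atTop, ε / 2 ≤ M t := by
    filter_upwards [eventually_ge_atTop (0:ℝ)] with t ht using hlb t ht
  have := le_liminf_of_le hbddabove.isCoboundedUnder_ge hevent
  linarith [this, hε0]




variable {α : Type*} [MeasurableSpace α]

private lemma kernel_integral_measurable (K : α → α → Measure α)
    (hKprob : ∀ x y, IsProbabilityMeasure (K x y))
    (hKmeas : ∀ A : Set α, MeasurableSet A → Measurable fun q : α × α => K q.1 q.2 A)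
    (f : α → ℝ) (hf : Measurable f) (Cf : ℝ) (hCf : ∀ x, |f x| ≤ Cf) :
    Measurable (fun q : α × α => ∫ z, f z ∂(K q.1 q.2))
      ∧ ∀ x y, |∫ z, f z ∂(K x y)| ≤ Cf := by
  have hκmeas : Measurable fun q : α × α => K q.1 q.2 :=
    Measure.measurable_of_measurable_coe _ hKmeas
  set κ : Kernel (α × α) α := ⟨fun q => K q.1 q.2, hκmeas⟩ with hκdef
  haveI : IsMarkovKernel κ := ⟨fun q => hKprob q.1 q.2⟩
  constructor
  · have hsm : StronglyMeasurable fun q : (α × α) × α => f q.2 :=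
      hf.stronglyMeasurable.comp_measurable measurable_snd
    have := hsm.integral_kernel_prod_right' (κ := κ)
    exact this.measurable
  · intro x y
    haveI := hKprob x y
    have hb : ∀ᵐ z ∂(K x y), ‖f z‖ ≤ Cf :=
      Filter.Eventually.of_forall fun z => by rw [Real.norm_eq_abs]; exact hCf z
    have := norm_integral_le_of_norm_le_const (μ := K x y) hb
    rwa [probReal_univ, mul_one, Real.norm_eq_abs] at this

private lemma integrable_of_bounded_kernel (K : α → α → Measure α)
    (hKprob : ∀ x y, IsProbabilityMeasure (K x y))
    (f : α → ℝ) (hf : Measurable f) (Cf : ℝ) (hCf : ∀ x, |f x| ≤ Cf) (x y : α) :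
    Integrable f (K x y) := by
  haveI := hKprob x y
  refine Integrable.mono' (integrable_const Cf) hf.aestronglyMeasurable ?_
  exact Filter.Eventually.of_forall fun z => by rw [Real.norm_eq_abs]; exact hCf z

private lemma ae_mem_of_supp (F : Set α) (hF : MeasurableSet F) (ν : Measure α)
    (hsupp : ν Fᶜ = 0) : ∀ᵐ x ∂ν, x ∈ F := by
  rw [ae_iff]
  convert hsupp using 2
  rfl

private lemma ae_prod_mem (F : Set α) (hF : MeasurableSet F) (ν : Measure α)
    [SFinite ν] (hsupp : ν Fᶜ = 0) :
    ∀ᵐ q : α × α ∂(ν.prod ν), q.1 ∈ F ∧ q.2 ∈ F := by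
  rw [ae_iff]
  have hz : (ν.prod ν) ((Fᶜ ×ˢ (univ : Set α)) ∪ ((univ : Set α) ×ˢ Fᶜ)) = 0 := by
    refine measure_union_null ?_ ?_
    · rw [Measure.prod_prod, hsupp, zero_mul]
    · rw [Measure.prod_prod, hsupp, mul_zero]
  refine measure_mono_null (fun q hq => ?_) hz
  simp only [Set.mem_setOf_eq, not_and_or] at hq
  rcases hq with h | h
  · exact Or.inl ⟨h, Set.mem_univ _⟩
  · exact Or.inr ⟨Set.mem_univ _, h⟩

private lemma integral_bounds (F : Set α) (hF : MeasurableSet F) (ν : Measure α)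
    [IsFiniteMeasure ν] (hsupp : ν Fᶜ = 0) (g : α → ℝ)
    (hg : AEStronglyMeasurable g ν) (c C : ℝ) (hb : ∀ x ∈ F, c ≤ g x ∧ g x ≤ C) :
    Integrable g ν ∧ c * (ν Set.univ).toReal ≤ ∫ x, g x ∂ν ∧
      (∫ x, g x ∂ν) ≤ C * (ν Set.univ).toReal := by
  have haeF : ∀ᵐ x ∂ν, x ∈ F := ae_mem_of_supp F hF ν hsupp
  have hint : Integrable g ν := by
    refine Integrable.mono' (integrable_const (max |c| |C|)) hg ?_
    filter_upwards [haeF] with x hx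
    rw [Real.norm_eq_abs, abs_le]
    have h1 := (hb x hx).1
    have h2 := (hb x hx).2
    constructor
    · have := neg_abs_le c
      have h3 : |c| ≤ max |c| |C| := le_max_left _ _
      linarith
    · have := le_abs_self C
      have h3 : |C| ≤ max |c| |C| := le_max_right _ _
      linarith
  refine ⟨hint, ?_, ?_⟩
  · have : (∫ _x, c ∂ν) ≤ ∫ x, g x ∂ν :=
      integral_mono_ae (integrable_const c) hint (haeF.mono fun x hx => (hb x hx).1)
    rwa [integral_const, smul_eq_mul, mul_comm] at this
  · have : (∫ x, g x ∂ν) ≤ ∫ _x, C ∂ν :=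
      integral_mono_ae hint (integrable_const C) (haeF.mono fun x hx => (hb x hx).2)
    rwa [integral_const, smul_eq_mul, mul_comm] at this

private lemma mating_lin (F : Set α) (hF : MeasurableSet F) (ν : Measure α)
    [IsFiniteMeasure ν] (hsupp : ν Fᶜ = 0) (W : α × α → ℝ)
    (hW : AEStronglyMeasurable W (ν.prod ν)) (mb : ℝ)
    (hWb : ∀ q : α × α, q.1 ∈ F → q.2 ∈ F → |W q| ≤ mb)
    (V : α × α → ℝ) (hV : AEStronglyMeasurable V (ν.prod ν)) (Cv : ℝ)
    (hCv : ∀ q, |V q| ≤ Cv) :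
    Integrable (fun q => W q * V q) (ν.prod ν) ∧
      (∫ x, ∫ y, W (x, y) * V (x, y) ∂ν ∂ν) = ∫ q, W q * V q ∂(ν.prod ν) := by
  have haeprod := ae_prod_mem F hF ν hsupp
  have hint : Integrable (fun q => W q * V q) (ν.prod ν) := by
    refine Integrable.mono' (integrable_const (mb * Cv)) (hW.mul hV) ?_
    filter_upwards [haeprod] with q hq
    rw [Real.norm_eq_abs, abs_mul]
    have h1 := hWb q hq.1 hq.2
    have h2 := hCv q
    have h3 := abs_nonneg (W q)
    have h4 := abs_nonneg (V q)
    nlinarith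
  exact ⟨hint, (integral_prod _ hint).symm⟩

private lemma semi_value (ν : Measure α) [IsFiniteMeasure ν]
    (p : α → ℝ) (hP : (∫ z, p z ∂ν) ≠ 0) :
    (∫ q : α × α, p q.1 * p q.2 / ∫ z, p z ∂ν ∂(ν.prod ν)) = ∫ z, p z ∂ν := by
  set P := ∫ z, p z ∂ν with hPdef
  have h1 : (fun q : α × α => p q.1 * p q.2 / P) = fun q : α × α => p q.1 * (p q.2 / P) := by
    funext q; ring
  rw [h1, integral_prod_mul (f := p) (g := fun y => p y / P)]
  rw [integral_div, div_self hP, mul_one]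

private lemma assort_value (F : Set α) (hF : MeasurableSet F) (ν : Measure α)
    [IsFiniteMeasure ν] (hsupp : ν Fᶜ = 0) (hν0 : ν ≠ 0)
    (a : α → α → ℝ) (hameas : Measurable fun q : α × α => a q.1 q.2)
    (hasymm : ∀ x y, a x y = a y x) (al au : ℝ) (hal : 0 < al) (hau : 0 < au)
    (ha : ∀ x ∈ F, ∀ y ∈ F, al ≤ a x y ∧ a x y ≤ au) :
    Integrable (fun q : α × α => a q.1 q.2 / (2 * ∫ r, a q.1 r ∂ν)
        + a q.1 q.2 / (2 * ∫ r, a q.2 r ∂ν)) (ν.prod ν) ∧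
    (∫ q : α × α, (a q.1 q.2 / (2 * ∫ r, a q.1 r ∂ν) + a q.1 q.2 / (2 * ∫ r, a q.2 r ∂ν))
        ∂(ν.prod ν)) = (ν Set.univ).toReal := by
  set A : α → ℝ := fun x => ∫ r, a x r ∂ν with hAdef
  set mν : ℝ := (ν Set.univ).toReal with hm
  have hm0 : 0 < mν := ENNReal.toReal_pos (Measure.measure_univ_ne_zero.mpr hν0)
    (measure_ne_top _ _)
  have hAmeas : Measurable A := by
    have := (hameas.stronglyMeasurable).integral_prod_right' (ν := ν)
    exact this.measurable
  have hAF : ∀ x ∈ F, al * mν ≤ A x ∧ A x ≤ au * mν := by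
    intro x hx
    have hsec : Measurable fun y => a x y := hameas.comp measurable_prodMk_left
    exact (integral_bounds F hF ν hsupp (fun y => a x y) hsec.aestronglyMeasurable al au
      (fun y hy => ha x hx y hy)).2
  have hApos : ∀ x ∈ F, 0 < A x := fun x hx => lt_of_lt_of_le (by positivity) (hAF x hx).1
  have haeprod := ae_prod_mem F hF ν hsupp
  -- integrability of both halves
  have hmeas1 : AEStronglyMeasurable (fun q : α × α => a q.1 q.2 / (2 * A q.1)) (ν.prod ν) :=
    (hameas.div ((measurable_const.mul (hAmeas.comp measurable_fst)))).aestronglyMeasurable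
  have hmeas2 : AEStronglyMeasurable (fun q : α × α => a q.1 q.2 / (2 * A q.2)) (ν.prod ν) :=
    (hameas.div ((measurable_const.mul (hAmeas.comp measurable_snd)))).aestronglyMeasurable
  have hbd : ∀ (x y : α), x ∈ F → y ∈ F → ∀ w ∈ F, |a x y / (2 * A w)| ≤ au / (2 * (al * mν)) := by
    intro x y hx hy w hw
    rw [abs_div]
    have h1 : |a x y| ≤ au := by
      have := ha x hx y hy
      rw [abs_le]; constructor <;> nlinarith
    have h2 : al * mν ≤ |2 * A w| := by
      rw [abs_of_nonneg (by nlinarith [hApos w hw])]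
      nlinarith [(hAF w hw).1]
    apply div_le_div₀ (by positivity) h1 (by positivity)
    calc 2 * (al * mν) = 2 * (al * mν) := rfl
      _ ≤ |2 * A w| := by
          rw [abs_of_nonneg (by nlinarith [hApos w hw])]
          nlinarith [(hAF w hw).1]
  have hint1 : Integrable (fun q : α × α => a q.1 q.2 / (2 * A q.1)) (ν.prod ν) := by
    refine Integrable.mono' (integrable_const (au / (2 * (al * mν)))) hmeas1 ?_
    filter_upwards [haeprod] with q hq
    rw [Real.norm_eq_abs]
    exact hbd q.1 q.2 hq.1 hq.2 q.1 hq.1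
  have hint2 : Integrable (fun q : α × α => a q.1 q.2 / (2 * A q.2)) (ν.prod ν) := by
    refine Integrable.mono' (integrable_const (au / (2 * (al * mν)))) hmeas2 ?_
    filter_upwards [haeprod] with q hq
    rw [Real.norm_eq_abs]
    exact hbd q.1 q.2 hq.1 hq.2 q.2 hq.2
  refine ⟨hint1.add hint2, ?_⟩
  rw [integral_add hint1 hint2]
  have haeF : ∀ᵐ x ∂ν, x ∈ F := ae_mem_of_supp F hF ν hsupp
  have hval1 : (∫ q : α × α, a q.1 q.2 / (2 * A q.1) ∂(ν.prod ν)) = mν / 2 := by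
    rw [integral_prod _ hint1]
    have hinner : ∀ x, (∫ y, a x y / (2 * A x) ∂ν) = A x * (2 * A x)⁻¹ := by
      intro x
      simp only [div_eq_mul_inv]
      rw [integral_mul_const]
    calc (∫ x, ∫ y, a x y / (2 * A x) ∂ν ∂ν) = ∫ x, A x * (2 * A x)⁻¹ ∂ν :=
          integral_congr_ae (Filter.Eventually.of_forall hinner)
      _ = ∫ _x, (1:ℝ)/2 ∂ν := by
          refine integral_congr_ae ?_
          filter_upwards [haeF] with x hx
          have := hApos x hx
          field_simp
      _ = mν / 2 := by rw [integral_const, smul_eq_mul, measureReal_def, ← hm]; ring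
  have hval2 : (∫ q : α × α, a q.1 q.2 / (2 * A q.2) ∂(ν.prod ν)) = mν / 2 := by
    rw [integral_prod_symm _ hint2]
    have hinner : ∀ y, (∫ x, a x y / (2 * A y) ∂ν) = A y * (2 * A y)⁻¹ := by
      intro y
      simp only [div_eq_mul_inv]
      rw [integral_mul_const]
      congr 1
      exact integral_congr_ae (Filter.Eventually.of_forall fun x => by rw [hasymm])
    calc (∫ y, ∫ x, a x y / (2 * A y) ∂ν ∂ν) = ∫ y, A y * (2 * A y)⁻¹ ∂ν :=
          integral_congr_ae (Filter.Eventually.of_forall hinner)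
      _ = ∫ _x, (1:ℝ)/2 ∂ν := by
          refine integral_congr_ae ?_
          filter_upwards [haeF] with y hy
          have := hApos y hy
          field_simp
      _ = mν / 2 := by rw [integral_const, smul_eq_mul, measureReal_def, ← hm]; ring
  rw [hval1, hval2]
  ring

private lemma meas_int_right (ν : Measure α) [SFinite ν] (U : α → α → ℝ)
    (hU : Measurable fun q : α × α => U q.1 q.2) :
    Measurable fun x => ∫ y, U x y ∂ν :=
  (hU.stronglyMeasurable.integral_prod_right').measurable

private lemma death_integrable (F : Set α) (hF : MeasurableSet F) (ν : Measure α)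
    [IsFiniteMeasure ν] (hsupp : ν Fᶜ = 0) (D I : α → ℝ) (U : α → α → ℝ)
    (hDmeas : Measurable D) (hImeas : Measurable I)
    (hUmeas : Measurable fun q : α × α => U q.1 q.2)
    (Du Iu Uu : ℝ)
    (hDb : ∀ x ∈ F, 0 ≤ D x ∧ D x ≤ Du) (hIb : ∀ x ∈ F, 0 ≤ I x ∧ I x ≤ Iu)
    (hUb : ∀ x ∈ F, ∀ y ∈ F, 0 ≤ U x y ∧ U x y ≤ Uu)
    (f : α → ℝ) (hf : Measurable f) (Cf : ℝ) (hCf : ∀ x, |f x| ≤ Cf) :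
    Integrable (fun x => f x * (D x + I x * ∫ y, U x y ∂ν)) ν := by
  have hmν : (0:ℝ) ≤ (ν Set.univ).toReal := ENNReal.toReal_nonneg
  have hJmeas : Measurable fun x => ∫ y, U x y ∂ν := meas_int_right ν U hUmeas
  have hJb : ∀ x ∈ F, 0 ≤ (∫ y, U x y ∂ν) ∧ (∫ y, U x y ∂ν) ≤ Uu * (ν Set.univ).toReal := by
    intro x hx
    have hsec : Measurable fun y => U x y := hUmeas.comp measurable_prodMk_left
    have h := (integral_bounds F hF ν hsupp (fun y => U x y) hsec.aestronglyMeasurable 0 Uu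
      (fun y hy => hUb x hx y hy)).2
    refine ⟨le_trans (by rw [zero_mul]) h.1, h.2⟩
  set B : ℝ := Cf * (Du + Iu * (Uu * (ν Set.univ).toReal)) with hB
  have hgb : ∀ x ∈ F, -B ≤ f x * (D x + I x * ∫ y, U x y ∂ν) ∧
      f x * (D x + I x * ∫ y, U x y ∂ν) ≤ B := by
    intro x hx
    have h1 := hCf x
    have h2 := hDb x hx
    have h3 := hIb x hx
    have h4 := hJb x hx
    have h5 : |D x + I x * ∫ y, U x y ∂ν| ≤ Du + Iu * (Uu * (ν Set.univ).toReal) := by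
      rw [abs_of_nonneg (by nlinarith)]
      nlinarith
    have h6 : |f x * (D x + I x * ∫ y, U x y ∂ν)| ≤ B := by
      rw [abs_mul, hB]
      exact mul_le_mul h1 h5 (abs_nonneg _) ((abs_nonneg _).trans h1)
    rw [abs_le] at h6
    exact h6
  exact (integral_bounds F hF ν hsupp _
    ((hf.mul (hDmeas.add (hImeas.mul hJmeas))).aestronglyMeasurable) (-B) B hgb).1

private lemma G_lin (F : Set α) (hF : MeasurableSet F) (ν : Measure α)
    [IsFiniteMeasure ν] (hsupp : ν Fᶜ = 0)
    (K : α → α → Measure α) (hKprob : ∀ x y, IsProbabilityMeasure (K x y))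
    (hKmeas : ∀ A : Set α, MeasurableSet A → Measurable fun q : α × α => K q.1 q.2 A)
    (W : α → α → ℝ) (hW : AEStronglyMeasurable (fun q : α × α => W q.1 q.2) (ν.prod ν))
    (mb : ℝ) (hWb : ∀ x ∈ F, ∀ y ∈ F, |W x y| ≤ mb)
    (D I : α → ℝ) (U : α → α → ℝ)
    (hDmeas : Measurable D) (hImeas : Measurable I)
    (hUmeas : Measurable fun q : α × α => U q.1 q.2)
    (Du Iu Uu : ℝ)
    (hDb : ∀ x ∈ F, 0 ≤ D x ∧ D x ≤ Du) (hIb : ∀ x ∈ F, 0 ≤ I x ∧ I x ≤ Iu)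
    (hUb : ∀ x ∈ F, ∀ y ∈ F, 0 ≤ U x y ∧ U x y ≤ Uu)
    (f g : α → ℝ) (hf : Measurable f) (hg : Measurable g) (Cf Cg : ℝ)
    (hCf : ∀ x, |f x| ≤ Cf) (hCg : ∀ x, |g x| ≤ Cg) :
    ((∫ x, ∫ y, W x y * ∫ z, f z + g z ∂(K x y) ∂ν ∂ν)
        - ∫ x, (f x + g x) * (D x + I x * ∫ y, U x y ∂ν) ∂ν)
      = ((∫ x, ∫ y, W x y * ∫ z, f z ∂(K x y) ∂ν ∂ν)
          - ∫ x, f x * (D x + I x * ∫ y, U x y ∂ν) ∂ν)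
        + ((∫ x, ∫ y, W x y * ∫ z, g z ∂(K x y) ∂ν ∂ν)
          - ∫ x, g x * (D x + I x * ∫ y, U x y ∂ν) ∂ν) := by
  have hVf := kernel_integral_measurable K hKprob hKmeas f hf Cf hCf
  have hVg := kernel_integral_measurable K hKprob hKmeas g hg Cg hCg
  have hVadd : ∀ x y : α, (∫ z, f z + g z ∂(K x y))
      = (∫ z, f z ∂(K x y)) + ∫ z, g z ∂(K x y) := fun x y =>
    integral_add (integrable_of_bounded_kernel K hKprob f hf Cf hCf x y)
      (integrable_of_bounded_kernel K hKprob g hg Cg hCg x y)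
  -- mating part
  have hWb' : ∀ q : α × α, q.1 ∈ F → q.2 ∈ F → |W q.1 q.2| ≤ mb :=
    fun q h1 h2 => hWb q.1 h1 q.2 h2
  have hmf := mating_lin F hF ν hsupp (fun q : α × α => W q.1 q.2) hW mb hWb'
    (fun q : α × α => ∫ z, f z ∂(K q.1 q.2)) hVf.1.aestronglyMeasurable Cf
    (fun q => hVf.2 q.1 q.2)
  have hmg := mating_lin F hF ν hsupp (fun q : α × α => W q.1 q.2) hW mb hWb'
    (fun q : α × α => ∫ z, g z ∂(K q.1 q.2)) hVg.1.aestronglyMeasurable Cg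
    (fun q => hVg.2 q.1 q.2)
  have hVfg_meas : AEStronglyMeasurable
      (fun q : α × α => ∫ z, f z + g z ∂(K q.1 q.2)) (ν.prod ν) := by
    have : (fun q : α × α => ∫ z, f z + g z ∂(K q.1 q.2))
        = fun q : α × α => (∫ z, f z ∂(K q.1 q.2)) + ∫ z, g z ∂(K q.1 q.2) :=
      funext fun q => hVadd q.1 q.2
    rw [this]
    exact (hVf.1.add hVg.1).aestronglyMeasurable
  have hVfg_b : ∀ q : α × α, |∫ z, f z + g z ∂(K q.1 q.2)| ≤ Cf + Cg := by
    intro q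
    rw [hVadd q.1 q.2]
    exact (abs_add_le _ _).trans (add_le_add (hVf.2 q.1 q.2) (hVg.2 q.1 q.2))
  have hmfg := mating_lin F hF ν hsupp (fun q : α × α => W q.1 q.2) hW mb hWb'
    (fun q : α × α => ∫ z, f z + g z ∂(K q.1 q.2)) hVfg_meas (Cf + Cg) hVfg_b
  dsimp only at hmf hmg hmfg
  have hmate : (∫ x, ∫ y, W x y * ∫ z, f z + g z ∂(K x y) ∂ν ∂ν)
      = (∫ x, ∫ y, W x y * ∫ z, f z ∂(K x y) ∂ν ∂ν)
        + (∫ x, ∫ y, W x y * ∫ z, g z ∂(K x y) ∂ν ∂ν) := by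
    rw [hmf.2, hmg.2, hmfg.2, ← integral_add hmf.1 hmg.1]
    refine integral_congr_ae (Filter.Eventually.of_forall fun q => ?_)
    dsimp only
    rw [hVadd q.1 q.2]
    ring
  -- death part
  have hdf := death_integrable F hF ν hsupp D I U hDmeas hImeas hUmeas Du Iu Uu
    hDb hIb hUb f hf Cf hCf
  have hdg := death_integrable F hF ν hsupp D I U hDmeas hImeas hUmeas Du Iu Uu
    hDb hIb hUb g hg Cg hCg
  have hdeath : (∫ x, (f x + g x) * (D x + I x * ∫ y, U x y ∂ν) ∂ν)
      = (∫ x, f x * (D x + I x * ∫ y, U x y ∂ν) ∂ν)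
        + ∫ x, g x * (D x + I x * ∫ y, U x y ∂ν) ∂ν := by
    rw [← integral_add hdf hdg]
    refine integral_congr_ae (Filter.Eventually.of_forall fun x => ?_)
    ring
  rw [hmate, hdeath]
  ring

set_option maxHeartbeats 1000000 in
private lemma G_pinned (F : Set α) (hF : MeasurableSet F)
    (K : α → α → Measure α) (hKprob : ∀ x y, IsProbabilityMeasure (K x y))
    (hKmeas : ∀ A : Set α, MeasurableSet A → Measurable fun q : α × α => K q.1 q.2 A)
    (m : α → α → Measure α → ℝ)
    (hWfacts : ∀ ν : Measure α, IsFiniteMeasure ν → ν Fᶜ = 0 → ν ≠ 0 →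
      AEStronglyMeasurable (fun q : α × α => m q.1 q.2 ν) (ν.prod ν) ∧
        ∃ mb : ℝ, ∀ x ∈ F, ∀ y ∈ F, |m x y ν| ≤ mb)
    (D I : α → ℝ) (U : α → α → ℝ)
    (hDmeas : Measurable D) (hImeas : Measurable I)
    (hUmeas : Measurable fun q : α × α => U q.1 q.2)
    (Du Iu Uu : ℝ)
    (hDb : ∀ x ∈ F, 0 ≤ D x ∧ D x ≤ Du) (hIb : ∀ x ∈ F, 0 ≤ I x ∧ I x ≤ Iu)
    (hUb : ∀ x ∈ F, ∀ y ∈ F, 0 ≤ U x y ∧ U x y ≤ Uu)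
    (μ₀ : Measure α) [IsFiniteMeasure μ₀]
    (μ : ℝ → Measure α)
    (hfin : ∀ t : ℝ, 0 ≤ t → IsFiniteMeasure (μ t) ∧ μ t Fᶜ = 0)
    (heq : ∀ f : α → ℝ, Measurable f → (∃ Cf : ℝ, ∀ x, |f x| ≤ Cf) →
      ∀ t : ℝ, 0 ≤ t →
        (∫ x, f x ∂(μ t)) = (∫ x, f x ∂μ₀)
          + ∫ s in (0:ℝ)..t,
              ((∫ x, ∫ y, m x y (μ s) * ∫ z, f z ∂(K x y) ∂(μ s) ∂(μ s))
                - ∫ x, f x * (D x + I x * ∫ y, U x y ∂(μ s)) ∂(μ s)))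
    (t : ℝ) (ht : 0 ≤ t)
    (hbad : ¬ IntervalIntegrable (fun σ =>
        (∫ x, ∫ y, m x y (μ σ) * ∫ z, (1:ℝ) ∂(K x y) ∂(μ σ) ∂(μ σ))
          - ∫ x, (1:ℝ) * (D x + I x * ∫ y, U x y ∂(μ σ)) ∂(μ σ)) volume 0 t)
    (s : ℝ) (hts : t ≤ s) : μ s = μ₀ := by
  have hs0 : 0 ≤ s := ht.trans hts
  haveI : IsFiniteMeasure (μ s) := (hfin s hs0).1
  set G : ℝ → ℝ := fun σ =>
      (∫ x, ∫ y, m x y (μ σ) * ∫ z, (1:ℝ) ∂(K x y) ∂(μ σ) ∂(μ σ))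
        - ∫ x, (1:ℝ) * (D x + I x * ∫ y, U x y ∂(μ σ)) ∂(μ σ) with hG
  have hbads : ¬ IntervalIntegrable G volume 0 s := by
    intro h
    refine hbad (h.mono_set ?_)
    rw [Set.uIcc_of_le ht, Set.uIcc_of_le hs0]
    exact Set.Icc_subset_Icc le_rfl hts
  have h1eq : (∫ x, (1:ℝ) ∂(μ s)) = (∫ x, (1:ℝ) ∂μ₀) + ∫ σ in (0:ℝ)..s, G σ :=
    heq (fun _ => (1:ℝ)) measurable_const ⟨1, fun x => by simp⟩ s hs0
  rw [intervalIntegral.integral_undef hbads, add_zero] at h1eq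
  refine Measure.ext fun A hA => ?_
  set f : α → ℝ := A.indicator (fun _ => (1:ℝ)) with hfdef
  have hfmeas : Measurable f := measurable_const.indicator hA
  have hfb : ∀ x, |f x| ≤ 1 := by
    intro x
    by_cases hx : x ∈ A <;> simp [hfdef, hx]
  have hfint : ∫ x, f x ∂(μ s) = ∫ x, f x ∂μ₀ := by
    have hfeq : (∫ x, f x ∂(μ s)) = (∫ x, f x ∂μ₀)
        + ∫ σ in (0:ℝ)..s, ((∫ x, ∫ y, m x y (μ σ) * ∫ z, f z ∂(K x y) ∂(μ σ) ∂(μ σ))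
            - ∫ x, f x * (D x + I x * ∫ y, U x y ∂(μ σ)) ∂(μ σ)) :=
      heq f hfmeas ⟨1, hfb⟩ s hs0
    by_cases hIf : IntervalIntegrable (fun σ =>
        (∫ x, ∫ y, m x y (μ σ) * ∫ z, f z ∂(K x y) ∂(μ σ) ∂(μ σ))
          - ∫ x, f x * (D x + I x * ∫ y, U x y ∂(μ σ)) ∂(μ σ)) volume 0 s
    · have hgmeas : Measurable (fun x => f x + 1) := hfmeas.add measurable_const
      have hgb : ∀ x, |f x + 1| ≤ 2 := by
        intro x
        have := hfb x
        calc |f x + 1| ≤ |f x| + |(1:ℝ)| := abs_add_le _ _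
          _ ≤ 2 := by rw [abs_one]; linarith
      have hgeq : (∫ x, f x + 1 ∂(μ s)) = (∫ x, f x + 1 ∂μ₀)
          + ∫ σ in (0:ℝ)..s, ((∫ x, ∫ y, m x y (μ σ) * ∫ z, f z + 1 ∂(K x y) ∂(μ σ) ∂(μ σ))
              - ∫ x, (f x + 1) * (D x + I x * ∫ y, U x y ∂(μ σ)) ∂(μ σ)) :=
        heq (fun x => f x + 1) hgmeas ⟨2, hgb⟩ s hs0
      have hlin : ∀ σ ∈ Set.uIoc (0:ℝ) s,
          ((∫ x, ∫ y, m x y (μ σ) * ∫ z, f z + 1 ∂(K x y) ∂(μ σ) ∂(μ σ))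
              - ∫ x, (f x + 1) * (D x + I x * ∫ y, U x y ∂(μ σ)) ∂(μ σ))
            = ((∫ x, ∫ y, m x y (μ σ) * ∫ z, f z ∂(K x y) ∂(μ σ) ∂(μ σ))
                - ∫ x, f x * (D x + I x * ∫ y, U x y ∂(μ σ)) ∂(μ σ)) + G σ := by
        intro σ hσ
        rw [Set.uIoc_of_le hs0] at hσ
        have hσ0 : 0 ≤ σ := hσ.1.le
        haveI : IsFiniteMeasure (μ σ) := (hfin σ hσ0).1
        have hsupp' : μ σ Fᶜ = 0 := (hfin σ hσ0).2
        rcases eq_or_ne (μ σ) 0 with hz | hz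
        · rw [hG]
          simp only [hz, integral_zero_measure]
          ring
        · obtain ⟨hWm, mb, hWb⟩ := hWfacts (μ σ) inferInstance hsupp' hz
          have hGL := G_lin F hF (μ σ) hsupp' K hKprob hKmeas
            (fun x y => m x y (μ σ)) hWm mb hWb D I U hDmeas hImeas hUmeas
            Du Iu Uu hDb hIb hUb f (fun _ => (1:ℝ)) hfmeas measurable_const 1 1
            hfb (fun x => by simp)
          rw [hG]
          exact hGL
      have hIg : ¬ IntervalIntegrable (fun σ =>
          (∫ x, ∫ y, m x y (μ σ) * ∫ z, f z + 1 ∂(K x y) ∂(μ σ) ∂(μ σ))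
            - ∫ x, (f x + 1) * (D x + I x * ∫ y, U x y ∂(μ σ)) ∂(μ σ)) volume 0 s := by
        intro h
        refine hbads ((h.sub hIf).congr ?_)
        intro σ hσ
        have hσlin := hlin σ hσ
        dsimp only
        rw [hσlin]
        ring
      rw [intervalIntegral.integral_undef hIg, add_zero] at hgeq
      have hintf_s : Integrable f (μ s) := by
        refine Integrable.mono' (integrable_const 1) hfmeas.aestronglyMeasurable ?_
        exact Filter.Eventually.of_forall fun x => by rw [Real.norm_eq_abs]; exact hfb x
      have hintf_0 : Integrable f μ₀ := by
        refine Integrable.mono' (integrable_const 1) hfmeas.aestronglyMeasurable ?_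
        exact Filter.Eventually.of_forall fun x => by rw [Real.norm_eq_abs]; exact hfb x
      rw [integral_add hintf_s (integrable_const 1),
        integral_add hintf_0 (integrable_const 1)] at hgeq
      simp only [integral_const, smul_eq_mul, mul_one] at hgeq h1eq
      linarith [hgeq, h1eq]
    · rw [intervalIntegral.integral_undef hIf, add_zero] at hfeq
      exact hfeq
  rw [hfdef] at hfint
  rw [integral_indicator_const (1:ℝ) hA, integral_indicator_const (1:ℝ) hA] at hfint
  simp only [smul_eq_mul, mul_one] at hfint
  exact (ENNReal.toReal_eq_toReal_iff' (measure_ne_top _ _) (measure_ne_top _ _)).mp hfint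

private lemma semi_W_facts (F : Set α) (hF : MeasurableSet F) (ν : Measure α)
    [IsFiniteMeasure ν] (hsupp : ν Fᶜ = 0) (hν0 : ν ≠ 0)
    (p : α → ℝ) (hpmeas : Measurable p) (pl pu : ℝ) (hpl : 0 < pl) (hpu : 0 < pu)
    (hp : ∀ x ∈ F, pl ≤ p x ∧ p x ≤ pu) :
    AEStronglyMeasurable (fun q : α × α => semiRandomRate p q.1 q.2 ν) (ν.prod ν) ∧
      ∃ mb : ℝ, ∀ x ∈ F, ∀ y ∈ F, |semiRandomRate p x y ν| ≤ mb := by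
  have hbounds := integral_bounds F hF ν hsupp p hpmeas.aestronglyMeasurable pl pu hp
  have hm0 : 0 < (ν Set.univ).toReal :=
    ENNReal.toReal_pos (Measure.measure_univ_ne_zero.mpr hν0) (measure_ne_top _ _)
  have hP0 : 0 < ∫ z, p z ∂ν := lt_of_lt_of_le (by positivity) hbounds.2.1
  constructor
  · simp only [semiRandomRate]
    exact (((hpmeas.comp measurable_fst).mul (hpmeas.comp measurable_snd)).div_const
      _).aestronglyMeasurable
  · refine ⟨pu * pu / ∫ z, p z ∂ν, fun x hx y hy => ?_⟩
    simp only [semiRandomRate]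
    rw [abs_div, abs_of_pos hP0, abs_mul]
    have h1 := hp x hx
    have h2 := hp y hy
    have h3 : |p x| ≤ pu := by rw [abs_of_pos (hpl.trans_le h1.1)]; exact h1.2
    have h4 : |p y| ≤ pu := by rw [abs_of_pos (hpl.trans_le h2.1)]; exact h2.2
    exact div_le_div₀ (mul_nonneg hpu.le hpu.le) (by nlinarith [abs_nonneg (p x), abs_nonneg (p y)]) hP0 le_rfl

private lemma semi_mating_value (F : Set α) (hF : MeasurableSet F) (ν : Measure α)
    [IsFiniteMeasure ν] (hsupp : ν Fᶜ = 0)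
    (K : α → α → Measure α) (hKprob : ∀ x y, IsProbabilityMeasure (K x y))
    (p : α → ℝ) (hpmeas : Measurable p) (pl pu : ℝ) (hpl : 0 < pl) (hpu : 0 < pu)
    (hp : ∀ x ∈ F, pl ≤ p x ∧ p x ≤ pu) :
    (∫ x, ∫ y, semiRandomRate p x y ν * ∫ z, (1:ℝ) ∂(K x y) ∂ν ∂ν) = ∫ z, p z ∂ν := by
  have hK1 : ∀ x y : α, (∫ z, (1:ℝ) ∂(K x y)) = 1 := fun x y => by
    haveI := hKprob x y
    simp
  have step1 : (∫ x, ∫ y, semiRandomRate p x y ν * ∫ z, (1:ℝ) ∂(K x y) ∂ν ∂ν)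
      = ∫ x, ∫ y, p x * p y / ∫ z, p z ∂ν ∂ν ∂ν := by
    refine integral_congr_ae (Filter.Eventually.of_forall fun x => ?_)
    refine integral_congr_ae (Filter.Eventually.of_forall fun y => ?_)
    dsimp only
    rw [hK1 x y, semiRandomRate, mul_one]
  rcases eq_or_ne ν 0 with hz | hz
  · rw [step1, hz]
    simp [integral_zero_measure]
  · have hbounds := integral_bounds F hF ν hsupp p hpmeas.aestronglyMeasurable pl pu hp
    have hm0 : 0 < (ν Set.univ).toReal :=
      ENNReal.toReal_pos (Measure.measure_univ_ne_zero.mpr hz) (measure_ne_top _ _)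
    have hP0 : 0 < ∫ z, p z ∂ν := lt_of_lt_of_le (by positivity) hbounds.2.1
    have hWf := semi_W_facts F hF ν hsupp hz p hpmeas pl pu hpl hpu hp
    obtain ⟨hWm, mb, hWb⟩ := hWf
    simp only [semiRandomRate] at hWm hWb
    have hint : Integrable (fun q : α × α => p q.1 * p q.2 / ∫ z, p z ∂ν) (ν.prod ν) := by
      refine Integrable.mono' (integrable_const mb) hWm ?_
      filter_upwards [ae_prod_mem F hF ν hsupp] with q hq
      rw [Real.norm_eq_abs]
      exact hWb q.1 hq.1 q.2 hq.2
    have hIter := integral_prod _ hint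
    dsimp only at hIter
    rw [step1, ← hIter]
    exact semi_value ν p hP0.ne'

private lemma assort_W_facts (F : Set α) (hF : MeasurableSet F) (ν : Measure α)
    [IsFiniteMeasure ν] (hsupp : ν Fᶜ = 0) (hν0 : ν ≠ 0)
    (a : α → α → ℝ) (hameas : Measurable fun q : α × α => a q.1 q.2)
    (al au : ℝ) (hal : 0 < al) (hau : 0 < au)
    (ha : ∀ x ∈ F, ∀ y ∈ F, al ≤ a x y ∧ a x y ≤ au) :
    AEStronglyMeasurable (fun q : α × α => assortativeRate a q.1 q.2 ν) (ν.prod ν) ∧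
      ∃ mb : ℝ, ∀ x ∈ F, ∀ y ∈ F, |assortativeRate a x y ν| ≤ mb := by
  have hm0 : 0 < (ν Set.univ).toReal :=
    ENNReal.toReal_pos (Measure.measure_univ_ne_zero.mpr hν0) (measure_ne_top _ _)
  have hAmeas : Measurable fun x => ∫ r, a x r ∂ν :=
    (hameas.stronglyMeasurable).integral_prod_right'.measurable
  have hAF : ∀ x ∈ F, al * (ν Set.univ).toReal ≤ (∫ r, a x r ∂ν) ∧
      (∫ r, a x r ∂ν) ≤ au * (ν Set.univ).toReal := by
    intro x hx
    have hsec : Measurable fun y => a x y := hameas.comp measurable_prodMk_left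
    exact (integral_bounds F hF ν hsupp (fun y => a x y) hsec.aestronglyMeasurable al au
      (fun y hy => ha x hx y hy)).2
  constructor
  · simp only [assortativeRate]
    exact ((hameas.div (measurable_const.mul (hAmeas.comp measurable_fst))).add
      (hameas.div (measurable_const.mul (hAmeas.comp measurable_snd)))).aestronglyMeasurable
  · refine ⟨au / (al * (ν Set.univ).toReal), fun x hx y hy => ?_⟩
    simp only [assortativeRate]
    have hbd : ∀ w ∈ F, |a x y / (2 * ∫ r, a w r ∂ν)| ≤ au / (2 * (al * (ν Set.univ).toReal)) := by
      intro w hw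
      have hApos : 0 < ∫ r, a w r ∂ν := lt_of_lt_of_le (by positivity) (hAF w hw).1
      rw [abs_div]
      have h1 : |a x y| ≤ au := by
        have := ha x hx y hy
        rw [abs_of_pos (hal.trans_le this.1)]
        exact this.2
      have h2 : 2 * (al * (ν Set.univ).toReal) ≤ |2 * ∫ r, a w r ∂ν| := by
        rw [abs_of_pos (by positivity)]
        nlinarith [(hAF w hw).1]
      exact div_le_div₀ (by positivity) h1 (by positivity) h2
    calc |a x y / (2 * ∫ r, a x r ∂ν) + a x y / (2 * ∫ r, a y r ∂ν)|
        ≤ |a x y / (2 * ∫ r, a x r ∂ν)| + |a x y / (2 * ∫ r, a y r ∂ν)| := abs_add_le _ _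
      _ ≤ au / (2 * (al * (ν Set.univ).toReal)) + au / (2 * (al * (ν Set.univ).toReal)) :=
          add_le_add (hbd x hx) (hbd y hy)
      _ = au / (al * (ν Set.univ).toReal) := by ring

private lemma assort_mating_value (F : Set α) (hF : MeasurableSet F) (ν : Measure α)
    [IsFiniteMeasure ν] (hsupp : ν Fᶜ = 0)
    (K : α → α → Measure α) (hKprob : ∀ x y, IsProbabilityMeasure (K x y))
    (a : α → α → ℝ) (hameas : Measurable fun q : α × α => a q.1 q.2)
    (hasymm : ∀ x y, a x y = a y x)
    (al au : ℝ) (hal : 0 < al) (hau : 0 < au)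
    (ha : ∀ x ∈ F, ∀ y ∈ F, al ≤ a x y ∧ a x y ≤ au) :
    (∫ x, ∫ y, assortativeRate a x y ν * ∫ z, (1:ℝ) ∂(K x y) ∂ν ∂ν)
      = (ν Set.univ).toReal := by
  have hK1 : ∀ x y : α, (∫ z, (1:ℝ) ∂(K x y)) = 1 := fun x y => by
    haveI := hKprob x y
    simp
  have step1 : (∫ x, ∫ y, assortativeRate a x y ν * ∫ z, (1:ℝ) ∂(K x y) ∂ν ∂ν)
      = ∫ x, ∫ y, (a x y / (2 * ∫ r, a x r ∂ν) + a x y / (2 * ∫ r, a y r ∂ν)) ∂ν ∂ν := by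
    refine integral_congr_ae (Filter.Eventually.of_forall fun x => ?_)
    refine integral_congr_ae (Filter.Eventually.of_forall fun y => ?_)
    dsimp only
    rw [hK1 x y, assortativeRate, mul_one]
  rcases eq_or_ne ν 0 with hz | hz
  · rw [step1, hz]
    simp [integral_zero_measure]
  · have hav := assort_value F hF ν hsupp hz a hameas hasymm al au hal hau ha
    have hIter := integral_prod _ hav.1
    dsimp only at hIter
    rw [step1, ← hIter]
    exact hav.2

private lemma death_value_bounds (F : Set α) (hF : MeasurableSet F) (ν : Measure α)
    [IsFiniteMeasure ν] (hsupp : ν Fᶜ = 0)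
    (D I : α → ℝ) (U : α → α → ℝ)
    (hDmeas : Measurable D) (hImeas : Measurable I)
    (hUmeas : Measurable fun q : α × α => U q.1 q.2)
    (dl du Il Iu Ul Uu : ℝ) (hIl : 0 ≤ Il) (hUl : 0 ≤ Ul)
    (hDb : ∀ x ∈ F, dl ≤ D x ∧ D x ≤ du) (hIb : ∀ x ∈ F, Il ≤ I x ∧ I x ≤ Iu)
    (hUb : ∀ x ∈ F, ∀ y ∈ F, Ul ≤ U x y ∧ U x y ≤ Uu) :
    (dl + Il * (Ul * (ν Set.univ).toReal)) * (ν Set.univ).toReal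
        ≤ (∫ x, (D x + I x * ∫ y, U x y ∂ν) ∂ν) ∧
      (∫ x, (D x + I x * ∫ y, U x y ∂ν) ∂ν)
        ≤ (du + Iu * (Uu * (ν Set.univ).toReal)) * (ν Set.univ).toReal := by
  have hmν : (0:ℝ) ≤ (ν Set.univ).toReal := ENNReal.toReal_nonneg
  have hJmeas : Measurable fun x => ∫ y, U x y ∂ν := meas_int_right ν U hUmeas
  have hJb : ∀ x ∈ F, Ul * (ν Set.univ).toReal ≤ (∫ y, U x y ∂ν) ∧
      (∫ y, U x y ∂ν) ≤ Uu * (ν Set.univ).toReal := by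
    intro x hx
    have hsec : Measurable fun y => U x y := hUmeas.comp measurable_prodMk_left
    exact (integral_bounds F hF ν hsupp (fun y => U x y) hsec.aestronglyMeasurable Ul Uu
      (fun y hy => hUb x hx y hy)).2
  have hgb : ∀ x ∈ F, dl + Il * (Ul * (ν Set.univ).toReal) ≤ D x + I x * ∫ y, U x y ∂ν ∧
      D x + I x * (∫ y, U x y ∂ν) ≤ du + Iu * (Uu * (ν Set.univ).toReal) := by
    intro x hx
    have h1 := hDb x hx
    have h2 := hIb x hx
    have h3 := hJb x hx
    constructor
    · have : Il * (Ul * (ν Set.univ).toReal) ≤ I x * ∫ y, U x y ∂ν := by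
        have hJ0 : 0 ≤ (∫ y, U x y ∂ν) := le_trans (by positivity) h3.1
        nlinarith
      linarith
    · have : I x * (∫ y, U x y ∂ν) ≤ Iu * (Uu * (ν Set.univ).toReal) := by
        have hJ0 : 0 ≤ (∫ y, U x y ∂ν) := le_trans (by positivity) h3.1
        have hI0 : 0 ≤ I x := le_trans hIl h2.1
        nlinarith
      linarith
  exact (integral_bounds F hF ν hsupp _
    ((hDmeas.add (hImeas.mul hJmeas)).aestronglyMeasurable) _ _ hgb).2

end AuxHelpers

set_option maxHeartbeats 4000000 in
/-- Proposition on extinction and persistence.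
Let `(μ_t)` solve the evolution equation and `M(t) = μ_t(F)`.
For semi-random mating: if `inf D ≥ sup p` the population becomes extinct
(`M(t) → 0`); if `sup D < inf p` the population is persistent
(`liminf M > 0` whenever `M(0) > 0`).  For assortative mating the same
holds with `sup p` and `inf p` replaced by `1`. -/
theorem extinction_and_persistence
    {d : ℕ} (F : Set (EuclideanSpace ℝ (Fin d)))
    (hFclosed : IsClosed F) (hFconn : IsConnected F)
    (hFint : (interior F).Nonempty)
    (K : EuclideanSpace ℝ (Fin d) → EuclideanSpace ℝ (Fin d) →
      Measure (EuclideanSpace ℝ (Fin d)))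
    (hKprob : ∀ x y, IsProbabilityMeasure (K x y))
    (hKsupp : ∀ x ∈ F, ∀ y ∈ F, K x y Fᶜ = 0)
    (hKsymm : ∀ x y, K x y = K y x)
    (hKmeas : ∀ A : Set (EuclideanSpace ℝ (Fin d)), MeasurableSet A →
      Measurable (fun q : EuclideanSpace ℝ (Fin d) × EuclideanSpace ℝ (Fin d) =>
        K q.1 q.2 A))
    (p D I : EuclideanSpace ℝ (Fin d) → ℝ)
    (U a : EuclideanSpace ℝ (Fin d) → EuclideanSpace ℝ (Fin d) → ℝ)
    (hpmeas : Measurable p) (hDmeas : Measurable D) (hImeas : Measurable I)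
    (hUmeas : Measurable (fun q : EuclideanSpace ℝ (Fin d) × EuclideanSpace ℝ (Fin d) => U q.1 q.2))
    (hameas : Measurable (fun q : EuclideanSpace ℝ (Fin d) × EuclideanSpace ℝ (Fin d) => a q.1 q.2))
    (hasymm : ∀ x y, a x y = a y x) (hUsymm : ∀ x y, U x y = U y x)
    (hDnonneg : ∀ x ∈ F, 0 ≤ D x)
    (pl pu al au Du Il Iu Ul Uu : ℝ)
    (hpl : 0 < pl) (hpu : 0 < pu) (hal : 0 < al) (hau : 0 < au) (hDu : 0 < Du)
    (hIl : 0 < Il) (hIu : 0 < Iu) (hUl : 0 < Ul) (hUu : 0 < Uu)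
    (hp : ∀ x ∈ F, pl ≤ p x ∧ p x ≤ pu)
    (ha : ∀ x ∈ F, ∀ y ∈ F, al ≤ a x y ∧ a x y ≤ au)
    (hD : ∀ x ∈ F, D x ≤ Du)
    (hI : ∀ x ∈ F, Il ≤ I x ∧ I x ≤ Iu)
    (hU : ∀ x ∈ F, ∀ y ∈ F, Ul ≤ U x y ∧ U x y ≤ Uu)
    (m : EuclideanSpace ℝ (Fin d) → EuclideanSpace ℝ (Fin d) →
      Measure (EuclideanSpace ℝ (Fin d)) → ℝ)
    (μ₀ : Measure (EuclideanSpace ℝ (Fin d)))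
    (hμ₀fin : IsFiniteMeasure μ₀) (hμ₀supp : μ₀ Fᶜ = 0)
    (μ : ℝ → Measure (EuclideanSpace ℝ (Fin d)))
    (hμ : IsMildSolution F m K D I U μ₀ μ)
    (M : ℝ → ℝ) (hM : M = fun t => (μ t F).toReal) :
    -- the case of semi-random mating
    (m = semiRandomRate p →
      -- extinction : inf_z D(z) ≥ sup_z p(z)
      ((∃ c : ℝ, (∀ z ∈ F, c ≤ D z) ∧ (∀ w ∈ F, p w ≤ c)) →
        Tendsto M atTop (nhds 0)) ∧
      -- persistence : sup_z D(z) < inf_z p(z), provided M(0) > 0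
      ((∃ c c' : ℝ, c < c' ∧ (∀ z ∈ F, D z ≤ c) ∧ (∀ w ∈ F, c' ≤ p w)) →
        0 < μ₀ F → 0 < liminf M atTop)) ∧
    -- the case of assortative mating
    (m = assortativeRate a →
      ((∀ z ∈ F, 1 ≤ D z) → Tendsto M atTop (nhds 0)) ∧
      ((∃ c : ℝ, c < 1 ∧ ∀ z ∈ F, D z ≤ c) →
        0 < μ₀ F → 0 < liminf M atTop)) := by
  obtain ⟨hμ0, hfin, heq⟩ := hμ
  have hF : MeasurableSet F := hFclosed.measurableSet
  haveI := hμ₀fin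
  have hmass : ∀ t : ℝ, 0 ≤ t → (μ t Set.univ) = μ t F := by
    intro t ht
    have h := measure_add_measure_compl (μ := μ t) hF
    rw [(hfin t ht).2, add_zero] at h
    exact h.symm
  have hM0 : ∀ s : ℝ, 0 ≤ s → 0 ≤ M s := by
    intro s hs
    rw [hM]
    exact ENNReal.toReal_nonneg
  set Gbase : ℝ → ℝ := fun σ =>
      (∫ x, ∫ y, m x y (μ σ) * ∫ z, (1:ℝ) ∂(K x y) ∂(μ σ) ∂(μ σ))
        - ∫ x, (1:ℝ) * (D x + I x * ∫ y, U x y ∂(μ σ)) ∂(μ σ) with hGbase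
  have hmass' : ∀ s : ℝ, 0 ≤ s → ((μ s) Set.univ).toReal = M s := by
    intro s hs
    rw [hmass s hs, hM]
  have h1 : ∀ t : ℝ, 0 ≤ t → M t = M 0 + ∫ σ in (0:ℝ)..t, Gbase σ := by
    intro t ht
    have h0 : (∫ x, (1:ℝ) ∂(μ t)) = (∫ x, (1:ℝ) ∂μ₀)
        + ∫ σ in (0:ℝ)..t, ((∫ x, ∫ y, m x y (μ σ) * ∫ z, (1:ℝ) ∂(K x y) ∂(μ σ) ∂(μ σ))
            - ∫ x, (1:ℝ) * (D x + I x * ∫ y, U x y ∂(μ σ)) ∂(μ σ)) :=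
      heq (fun _ => (1:ℝ)) measurable_const ⟨1, fun x => by simp⟩ t ht
    rw [← hGbase] at h0
    rw [integral_const, integral_const, smul_eq_mul, mul_one, smul_eq_mul, mul_one,
      measureReal_def, measureReal_def, hmass t ht] at h0
    have hμ₀univ : μ₀ Set.univ = μ₀ F := by
      have h := measure_add_measure_compl (μ := μ₀) hF
      rw [hμ₀supp, add_zero] at h
      exact h.symm
    rw [hμ₀univ, ← hμ0] at h0
    rw [hM]
    exact h0
  have hDb0 : ∀ x ∈ F, 0 ≤ D x ∧ D x ≤ Du := fun x hx => ⟨hDnonneg x hx, hD x hx⟩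
  have hIb0 : ∀ x ∈ F, 0 ≤ I x ∧ I x ≤ Iu := fun x hx =>
    ⟨le_trans hIl.le (hI x hx).1, (hI x hx).2⟩
  have hUb0 : ∀ x ∈ F, ∀ y ∈ F, 0 ≤ U x y ∧ U x y ≤ Uu := fun x hx y hy =>
    ⟨le_trans hUl.le (hU x hx y hy).1, (hU x hx y hy).2⟩
  have hM00pos : 0 < μ₀ F → 0 < M 0 := by
    intro h
    rw [hM]
    show 0 < (μ 0 F).toReal
    rw [hμ0]
    exact ENNReal.toReal_pos h.ne' (measure_ne_top _ _)
  -- death bounds, independent of the rate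
  have hΨ : ∀ s : ℝ, 0 ≤ s → ∀ dl du : ℝ, (∀ x ∈ F, dl ≤ D x) → (∀ x ∈ F, D x ≤ du) →
      (dl + Il * (Ul * M s)) * M s ≤ (∫ x, (D x + I x * ∫ y, U x y ∂(μ s)) ∂(μ s)) ∧
        (∫ x, (D x + I x * ∫ y, U x y ∂(μ s)) ∂(μ s)) ≤ (du + Iu * (Uu * M s)) * M s := by
    intro s hs dl du hdl hdu
    haveI := (hfin s hs).1
    have h := death_value_bounds F hF (μ s) (hfin s hs).2 D I U hDmeas hImeas hUmeas
      dl du Il Iu Ul Uu hIl.le hUl.le (fun x hx => ⟨hdl x hx, hdu x hx⟩) hI hU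
    rwa [hmass' s hs] at h
  constructor
  · -- semi-random case
    intro hm
    subst hm
    have hrep : ∀ s : ℝ, 0 ≤ s → Gbase s = (∫ z, p z ∂(μ s))
        - ∫ x, (D x + I x * ∫ y, U x y ∂(μ s)) ∂(μ s) := by
      intro s hs
      haveI := (hfin s hs).1
      rw [hGbase]
      dsimp only
      rw [semi_mating_value F hF (μ s) (hfin s hs).2 K hKprob p hpmeas pl pu hpl hpu hp]
      congr 1
      exact integral_congr_ae (Filter.Eventually.of_forall fun x => one_mul _)
    have hPb : ∀ s : ℝ, 0 ≤ s → pl * M s ≤ (∫ z, p z ∂(μ s)) ∧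
        (∫ z, p z ∂(μ s)) ≤ pu * M s := by
      intro s hs
      haveI := (hfin s hs).1
      have h := (integral_bounds F hF (μ s) (hfin s hs).2 p hpmeas.aestronglyMeasurable
        pl pu hp).2
      rwa [hmass' s hs] at h
    have h5 : ∀ t : ℝ, 0 ≤ t → ¬ IntervalIntegrable Gbase volume 0 t →
        ∀ s, t ≤ s → M s = M 0 ∧ Gbase s = Gbase 0 := by
      intro t ht hbad s hts
      rw [hGbase] at hbad
      have hμs : μ s = μ₀ := by
        refine G_pinned F hF K hKprob hKmeas (semiRandomRate p) ?_ D I U hDmeas hImeas hUmeas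
          Du Iu Uu hDb0 hIb0 hUb0 μ₀ μ hfin heq t ht hbad s hts
        intro ν hνf hνs hν0
        haveI := hνf
        exact semi_W_facts F hF ν hνs hν0 p hpmeas pl pu hpl hpu hp
      have hμs0 : μ s = μ 0 := by rw [hμs, hμ0]
      constructor
      · rw [hM]
        show (μ s F).toReal = (μ 0 F).toReal
        rw [hμs0]
      · rw [hGbase]
        dsimp only
        rw [hμs0]
    have h4 : ∀ s : ℝ, 0 ≤ s → |Gbase s| ≤ (pu + Du + Iu * Uu) * (1 + M s + M s ^ 2) := by
      intro s hs
      rw [hrep s hs]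
      have hP := hPb s hs
      have hΨb := hΨ s hs 0 Du hDnonneg hD
      have hm0 := hM0 s hs
      rw [abs_le]
      constructor
      · nlinarith [sq_nonneg (M s), hm0, mul_nonneg hpu.le hm0, mul_nonneg hDu.le hm0,
          mul_nonneg (mul_nonneg hIu.le hUu.le) hm0, mul_nonneg hpu.le (sq_nonneg (M s)),
          mul_nonneg hDu.le (sq_nonneg (M s)),
          mul_nonneg (mul_nonneg hIu.le hUu.le) (sq_nonneg (M s)),
          mul_nonneg (mul_nonneg hIl.le hUl.le) (sq_nonneg (M s)),
          mul_nonneg hpl.le hm0]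
      · nlinarith [sq_nonneg (M s), hm0, mul_nonneg hpu.le hm0, mul_nonneg hDu.le hm0,
          mul_nonneg (mul_nonneg hIu.le hUu.le) hm0, mul_nonneg hpu.le (sq_nonneg (M s)),
          mul_nonneg hDu.le (sq_nonneg (M s)),
          mul_nonneg (mul_nonneg hIu.le hUu.le) (sq_nonneg (M s)),
          mul_nonneg (mul_nonneg hIl.le hUl.le) (sq_nonneg (M s)),
          mul_nonneg hpl.le hm0]
    constructor
    · rintro ⟨c, hcD, hpc⟩
      have hκ : (0:ℝ) < Il * Ul := by positivity
      have hGneg : ∀ s : ℝ, 0 ≤ s → Gbase s ≤ -(Il * Ul * M s ^ 2) := by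
        intro s hs
        haveI := (hfin s hs).1
        rw [hrep s hs]
        have hPu : (∫ z, p z ∂(μ s)) ≤ c * M s := by
          have h := (integral_bounds F hF (μ s) (hfin s hs).2 p hpmeas.aestronglyMeasurable
            pl c (fun x hx => ⟨(hp x hx).1, hpc x hx⟩)).2.2
          rwa [hmass' s hs] at h
        have hΨl := (hΨ s hs c Du hcD hD).1
        have hm0 := hM0 s hs
        nlinarith
      have hgood := abstract_good Gbase M 0 (pu + Du + Iu * Uu) le_rfl (by positivity)
        h1 hM0 h4
        (fun s hs => by nlinarith [hGneg s hs, mul_nonneg hκ.le (sq_nonneg (M s))]) h5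
      exact abstract_ext Gbase M (Il * Ul) hκ h1 hM0 hGneg hgood
    · rintro ⟨c, c', hcc', hDc, hpc'⟩ hμF
      have hC₁ : (0:ℝ) < Il * Ul := by positivity
      have hC₂ : (0:ℝ) < Iu * Uu := by positivity
      have hup2 : ∀ s : ℝ, 0 ≤ s → Gbase s ≤ M s * (pu - Il * Ul * M s) := by
        intro s hs
        rw [hrep s hs]
        have hP := (hPb s hs).2
        have hΨl := (hΨ s hs 0 Du hDnonneg hD).1
        have hm0 := hM0 s hs
        nlinarith [sq_nonneg (M s)]
      have hlow2 : ∀ s : ℝ, 0 ≤ s → M s * ((c' - c) - Iu * Uu * M s) ≤ Gbase s := by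
        intro s hs
        haveI := (hfin s hs).1
        rw [hrep s hs]
        have hPl : c' * M s ≤ (∫ z, p z ∂(μ s)) := by
          have h := (integral_bounds F hF (μ s) (hfin s hs).2 p hpmeas.aestronglyMeasurable
            c' pu (fun x hx => ⟨hpc' x hx, (hp x hx).2⟩)).2.1
          rwa [hmass' s hs] at h
        have hΨu := (hΨ s hs 0 c hDnonneg hDc).2
        have hm0 := hM0 s hs
        nlinarith [sq_nonneg (M s)]
      have hgood := abstract_good Gbase M (pu ^ 2 / (4 * (Il * Ul))) (pu + Du + Iu * Uu)
        (by positivity) (by positivity) h1 hM0 h4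
        (fun s hs => by
          have hu := hup2 s hs
          rw [le_div_iff₀ (by positivity)]
          nlinarith [sq_nonneg (pu - 2 * (Il * Ul) * M s), hC₁, hu]) h5
      exact abstract_pers Gbase M (c' - c) (Il * Ul) (Iu * Uu) pu (by linarith) hC₁ hC₂ hpu
        h1 hM0 hup2 hlow2 hgood (hM00pos hμF)
  · -- assortative case
    intro hm
    subst hm
    have hrep : ∀ s : ℝ, 0 ≤ s → Gbase s = M s
        - ∫ x, (D x + I x * ∫ y, U x y ∂(μ s)) ∂(μ s) := by
      intro s hs
      haveI := (hfin s hs).1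
      rw [hGbase]
      dsimp only
      rw [assort_mating_value F hF (μ s) (hfin s hs).2 K hKprob a hameas hasymm
        al au hal hau ha, hmass' s hs]
      congr 1
      exact integral_congr_ae (Filter.Eventually.of_forall fun x => one_mul _)
    have h5 : ∀ t : ℝ, 0 ≤ t → ¬ IntervalIntegrable Gbase volume 0 t →
        ∀ s, t ≤ s → M s = M 0 ∧ Gbase s = Gbase 0 := by
      intro t ht hbad s hts
      rw [hGbase] at hbad
      have hμs : μ s = μ₀ := by
        refine G_pinned F hF K hKprob hKmeas (assortativeRate a) ?_ D I U hDmeas hImeas hUmeas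
          Du Iu Uu hDb0 hIb0 hUb0 μ₀ μ hfin heq t ht hbad s hts
        intro ν hνf hνs hν0
        haveI := hνf
        exact assort_W_facts F hF ν hνs hν0 a hameas al au hal hau ha
      have hμs0 : μ s = μ 0 := by rw [hμs, hμ0]
      constructor
      · rw [hM]
        show (μ s F).toReal = (μ 0 F).toReal
        rw [hμs0]
      · rw [hGbase]
        dsimp only
        rw [hμs0]
    have h4 : ∀ s : ℝ, 0 ≤ s → |Gbase s| ≤ (1 + Du + Iu * Uu) * (1 + M s + M s ^ 2) := by
      intro s hs
      rw [hrep s hs]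
      have hΨb := hΨ s hs 0 Du hDnonneg hD
      have hm0 := hM0 s hs
      rw [abs_le]
      constructor
      · nlinarith [sq_nonneg (M s), hm0, mul_nonneg hpu.le hm0, mul_nonneg hDu.le hm0,
          mul_nonneg (mul_nonneg hIu.le hUu.le) hm0, mul_nonneg hpu.le (sq_nonneg (M s)),
          mul_nonneg hDu.le (sq_nonneg (M s)),
          mul_nonneg (mul_nonneg hIu.le hUu.le) (sq_nonneg (M s)),
          mul_nonneg (mul_nonneg hIl.le hUl.le) (sq_nonneg (M s)),
          mul_nonneg hpl.le hm0]
      · nlinarith [sq_nonneg (M s), hm0, mul_nonneg hpu.le hm0, mul_nonneg hDu.le hm0,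
          mul_nonneg (mul_nonneg hIu.le hUu.le) hm0, mul_nonneg hpu.le (sq_nonneg (M s)),
          mul_nonneg hDu.le (sq_nonneg (M s)),
          mul_nonneg (mul_nonneg hIu.le hUu.le) (sq_nonneg (M s)),
          mul_nonneg (mul_nonneg hIl.le hUl.le) (sq_nonneg (M s)),
          mul_nonneg hpl.le hm0]
    constructor
    · intro h1D
      have hκ : (0:ℝ) < Il * Ul := by positivity
      have hGneg : ∀ s : ℝ, 0 ≤ s → Gbase s ≤ -(Il * Ul * M s ^ 2) := by
        intro s hs
        rw [hrep s hs]
        have hΨl := (hΨ s hs 1 Du h1D hD).1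
        have hm0 := hM0 s hs
        nlinarith
      have hgood := abstract_good Gbase M 0 (1 + Du + Iu * Uu) le_rfl (by positivity)
        h1 hM0 h4
        (fun s hs => by nlinarith [hGneg s hs, mul_nonneg hκ.le (sq_nonneg (M s))]) h5
      exact abstract_ext Gbase M (Il * Ul) hκ h1 hM0 hGneg hgood
    · rintro ⟨c, hc1, hDc⟩ hμF
      have hC₁ : (0:ℝ) < Il * Ul := by positivity
      have hC₂ : (0:ℝ) < Iu * Uu := by positivity
      have hup2 : ∀ s : ℝ, 0 ≤ s → Gbase s ≤ M s * (1 - Il * Ul * M s) := by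
        intro s hs
        rw [hrep s hs]
        have hΨl := (hΨ s hs 0 Du hDnonneg hD).1
        have hm0 := hM0 s hs
        nlinarith [sq_nonneg (M s)]
      have hlow2 : ∀ s : ℝ, 0 ≤ s → M s * ((1 - c) - Iu * Uu * M s) ≤ Gbase s := by
        intro s hs
        rw [hrep s hs]
        have hΨu := (hΨ s hs 0 c hDnonneg hDc).2
        have hm0 := hM0 s hs
        nlinarith [sq_nonneg (M s)]
      have hgood := abstract_good Gbase M (1 ^ 2 / (4 * (Il * Ul))) (1 + Du + Iu * Uu)
        (by positivity) (by positivity) h1 hM0 h4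
        (fun s hs => by
          have hu := hup2 s hs
          rw [le_div_iff₀ (by positivity)]
          nlinarith [sq_nonneg (1 - 2 * (Il * Ul) * M s), hC₁, hu]) h5
      exact abstract_pers Gbase M (1 - c) (Il * Ul) (Iu * Uu) 1 (by linarith) hC₁ hC₂
        one_pos h1 hM0 hup2 hlow2 hgood (hM00pos hμF)

end
end

section
/- Suppose the coefficients p, D, I, U are positive constants (independent of the phenotypic trait) with D < p in the case of semi-random mating (respectively D < 1 =: p in the case of assortative mating). Then for every solution (μ_t)_{t≥0} of the measure-valued evolution equation with μ₀(F) > 0, the total mass M(t) = μ_t(F) satisfies lim_{t→∞} M(t) = (p − D)/(IU). Consequently, all solutions with positive initial mass converge to the set 𝒜 = {μ ∈ M(F) : μ(F) = (p−D)/(IU)}, and 𝒜 is invariant under the equation. -/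
open MeasureTheory Filter ENNReal

noncomputable section

section LogisticAux
open Set Topology

/-- Explicit logistic solution. -/
def logi (c b m t : ℝ) : ℝ := c * m / (b * m + (c - b * m) * Real.exp (-c * t))

lemma logi_den_pos {c b m : ℝ} (hc : 0 < c) (hb : 0 < b) (hm : 0 < m) {t : ℝ} (ht : 0 ≤ t) :
    0 < b * m + (c - b * m) * Real.exp (-c * t) := by
  have h1 : Real.exp (-c * t) ≤ 1 := Real.exp_le_one_iff.2 (by nlinarith)
  have h2 : 0 < Real.exp (-c * t) := Real.exp_pos _
  rcases le_or_gt (b * m) c with h | h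
  · nlinarith
  · nlinarith

lemma logi_zero {c b m : ℝ} (hc : 0 < c) : logi c b m 0 = m := by
  simp [logi]
  field_simp

lemma logi_nonneg {c b m : ℝ} (hc : 0 < c) (hb : 0 < b) (hm : 0 < m) {t : ℝ} (ht : 0 ≤ t) :
    0 ≤ logi c b m t :=
  div_nonneg (by positivity) (logi_den_pos hc hb hm ht).le

lemma logi_le {c b m : ℝ} (hc : 0 < c) (hb : 0 < b) (hm : 0 < m) {t : ℝ} (ht : 0 ≤ t) :
    logi c b m t ≤ max (c / b) m := by
  have hden := logi_den_pos hc hb hm ht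
  have h1 : Real.exp (-c * t) ≤ 1 := Real.exp_le_one_iff.2 (by nlinarith)
  have h2 : 0 < Real.exp (-c * t) := Real.exp_pos _
  rcases le_or_gt (b * m) c with h | h
  · refine le_max_of_le_left ?_
    rw [logi, div_le_div_iff₀ hden hb]
    nlinarith [mul_nonneg (mul_nonneg hc.le (sub_nonneg.2 h)) (Real.exp_pos (-c*t)).le]
  · refine le_max_of_le_right ?_
    rw [logi, div_le_iff₀ hden]
    nlinarith [mul_nonneg (mul_nonneg hm.le (sub_nonneg.2 h.le)) (sub_nonneg.2 h1)]

lemma logi_hasDeriv {c b m : ℝ} (hc : 0 < c) (hb : 0 < b) (hm : 0 < m) {t : ℝ} (ht : 0 ≤ t) :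
    HasDerivAt (logi c b m) (logi c b m t * (c - b * logi c b m t)) t := by
  have hden := logi_den_pos hc hb hm ht
  set den : ℝ → ℝ := fun t => b * m + (c - b * m) * Real.exp (-c * t) with hden_def
  have hd : HasDerivAt den ((c - b * m) * (Real.exp (-c * t) * (-c))) t := by
    have h0 : HasDerivAt (fun t : ℝ => Real.exp (-c * t)) (Real.exp (-c * t) * (-c)) t := by
      have := (Real.hasDerivAt_exp (-c * t)).comp t ((hasDerivAt_id t).const_mul (-c))
      simpa [Function.comp_def, mul_comm] using this
    exact (h0.const_mul (c - b * m)).const_add (b * m)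
  have hq : HasDerivAt (fun t => c * m / den t)
      ((0 * den t - c * m * ((c - b * m) * (Real.exp (-c * t) * (-c)))) / (den t) ^ 2) t :=
    (hasDerivAt_const t (c * m)).div hd (ne_of_gt hden)
  have heq : (0 * den t - c * m * ((c - b * m) * (Real.exp (-c * t) * (-c)))) / (den t) ^ 2
      = logi c b m t * (c - b * logi c b m t) := by
    have hden' : den t ≠ 0 := ne_of_gt hden
    rw [logi]
    show (0 * den t - c * m * ((c - b * m) * (Real.exp (-c * t) * (-c)))) / (den t) ^ 2
      = c * m / den t * (c - b * (c * m / den t))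
    field_simp
    simp only [hden_def, neg_mul]
    ring
  rw [heq] at hq
  exact hq

lemma logi_tendsto {c b m : ℝ} (hc : 0 < c) (hb : 0 < b) (hm : 0 < m) :
    Tendsto (logi c b m) atTop (nhds (c / b)) := by
  have hexp : Tendsto (fun t : ℝ => Real.exp (-c * t)) atTop (nhds 0) := by
    apply Real.tendsto_exp_atBot.comp
    exact (tendsto_const_nhds.neg_mul_atTop (by simpa using hc) tendsto_id)
  have hden : Tendsto (fun t : ℝ => b * m + (c - b * m) * Real.exp (-c * t)) atTop
      (nhds (b * m)) := by
    have := (hexp.const_mul (c - b * m)).const_add (b * m)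
    simpa using this
  have := (tendsto_const_nhds (x := c * m) (f := atTop (α := ℝ))).div hden (by positivity)
  have heq : c * m / (b * m) = c / b := by field_simp
  rw [heq] at this
  exact this

lemma logi_fixed {c b : ℝ} (hc : 0 < c) (hb : 0 < b) (t : ℝ) : logi c b (c/b) t = c / b := by
  have hb' : b ≠ 0 := ne_of_gt hb
  have hc' : c ≠ 0 := ne_of_gt hc
  rw [logi]
  have h1 : b * (c/b) = c := by field_simp
  rw [h1, sub_self, zero_mul, add_zero]
  field_simp

lemma quad_le {c b x : ℝ} (hb : 0 < b) :
    x * (c - b * x) ≤ c^2 / (4*b) := by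
  rw [le_div_iff₀ (by positivity : (0:ℝ) < 4*b)]
  nlinarith [sq_nonneg (c - 2*b*x)]

lemma quad_abs_le {c b x R : ℝ} (hc : 0 < c) (hb : 0 < b) (hx : 0 ≤ x) (hxR : x ≤ R) :
    |x * (c - b * x)| ≤ R * (c + b * R) := by
  have hR : 0 ≤ R := le_trans hx hxR
  rw [abs_le]
  constructor
  · nlinarith [mul_nonneg hx hc.le, mul_le_mul hxR hxR hx hR, mul_nonneg hR hc.le]
  · nlinarith [mul_nonneg (mul_nonneg hb.le hx) hx, mul_le_mul_of_nonneg_right hxR hc.le,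
      mul_nonneg (mul_nonneg hb.le hR) hR]

/-- Solutions of the integrated logistic equation agree with the explicit solution. -/
lemma mass_ode {c b : ℝ} (hc : 0 < c) (hb : 0 < b) (M : ℝ → ℝ)
    (hMnn : ∀ t, 0 ≤ M t) (hM0 : 0 < M 0)
    (heq : ∀ t, 0 ≤ t → M t = M 0 + ∫ s in (0:ℝ)..t, M s * (c - b * M s)) :
    ∀ t, 0 ≤ t → M t = logi c b (M 0) t := by
  set h : ℝ → ℝ := fun s => M s * (c - b * M s) with hh
  have boundM : ∀ t, 0 ≤ t → M t ≤ M 0 + t * (c^2/(4*b)) := by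
    intro t ht
    by_cases hi : IntervalIntegrable h volume 0 t
    · rw [heq t ht]
      have hle : (∫ s in (0:ℝ)..t, h s) ≤ ∫ _s in (0:ℝ)..t, (c^2/(4*b)) :=
        intervalIntegral.integral_mono_on ht hi intervalIntegrable_const
          (fun x _ => quad_le hb)
      rw [intervalIntegral.integral_const, smul_eq_mul, sub_zero] at hle
      linarith
    · rw [heq t ht, intervalIntegral.integral_undef hi, add_zero]
      have : 0 ≤ t * (c^2/(4*b)) := by positivity
      linarith
  have hint : ∀ T, 0 ≤ T → IntervalIntegrable h volume 0 T := by
    by_contra hS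
    push_neg at hS
    obtain ⟨T₀, hT₀, hT₀i⟩ := hS
    set S : Set ℝ := {T | 0 ≤ T ∧ ¬ IntervalIntegrable h volume 0 T} with hSdef
    have hSne : S.Nonempty := ⟨T₀, hT₀, hT₀i⟩
    have hSbdd : BddBelow S := ⟨0, fun x hx => hx.1⟩
    set τ := sInf S with hτdef
    have hτ0 : 0 ≤ τ := le_csInf hSne (fun x hx => hx.1)
    have key1 : ∀ t, τ < t → ¬ IntervalIntegrable h volume 0 t := by
      intro t ht hi
      obtain ⟨s, hsS, hst⟩ := exists_lt_of_csInf_lt hSne ht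
      exact hsS.2 (hi.mono_set (uIcc_subset_uIcc left_mem_uIcc
        (mem_uIcc.2 (Or.inl ⟨hsS.1, hst.le⟩))))
    have key2 : ∀ t, τ < t → M t = M 0 := by
      intro t ht
      rw [heq t (le_trans hτ0 ht.le), intervalIntegral.integral_undef (key1 t ht), add_zero]
    have key3 : ∀ t, 0 ≤ t → t < τ → IntervalIntegrable h volume 0 t := by
      intro t ht htτ
      by_contra hi
      exact absurd (csInf_le hSbdd ⟨ht, hi⟩) (not_le.2 htτ)
    set R : ℝ := M 0 + (τ+1) * (c^2/(4*b)) with hRdef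
    have hMR : ∀ t, 0 ≤ t → t ≤ τ + 1 → M t ≤ R := by
      intro t ht htτ
      refine (boundM t ht).trans ?_
      have hq : (0:ℝ) ≤ c^2/(4*b) := by positivity
      have := mul_le_mul_of_nonneg_right htτ hq
      simp only [hRdef]
      linarith
    set C : ℝ := R * (c + b * R) with hCdef
    have hhbnd : ∀ t, 0 ≤ t → t ≤ τ + 1 → |h t| ≤ C :=
      fun t ht htτ => quad_abs_le hc hb (hMnn t) (hMR t ht htτ)
    have hmeasIoo : MeasureTheory.AEStronglyMeasurable h (volume.restrict (Ioo 0 τ)) := by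
      rcases eq_or_lt_of_le hτ0 with hτeq | hτpos
      · rw [← hτeq]
        simp
      · have hsub : Ioo 0 τ ⊆ ⋃ n : ℕ, Ioc 0 (τ - τ / ((n:ℝ)+2)) := by
          intro x hx
          have hxτ : 0 < τ - x := by linarith [hx.2]
          obtain ⟨n, hn⟩ := exists_nat_gt (τ / (τ - x))
          refine mem_iUnion.2 ⟨n, hx.1, ?_⟩
          have h2 : τ / (τ - x) < (n : ℝ) + 2 := by linarith
          rw [div_lt_iff₀ hxτ] at h2
          have hn2 : (0:ℝ) < (n:ℝ) + 2 := by positivity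
          have h3 : τ / ((n:ℝ)+2) ≤ τ - x := by
            rw [div_le_iff₀ hn2]
            nlinarith
          linarith
        refine MeasureTheory.AEStronglyMeasurable.mono_measure ?_
          (MeasureTheory.Measure.restrict_mono hsub le_rfl)
        rw [aestronglyMeasurable_iUnion_iff]
        intro n
        have hn2 : (0:ℝ) < (n:ℝ) + 2 := by positivity
        have hu0 : 0 ≤ τ - τ/((n:ℝ)+2) := by
          have : τ/((n:ℝ)+2) ≤ τ/1 := by
            apply div_le_div_of_nonneg_left hτ0 (by norm_num) (by linarith)
          simp at this
          linarith
        have huτ : τ - τ/((n:ℝ)+2) < τ := by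
          have : 0 < τ/((n:ℝ)+2) := by positivity
          linarith
        exact ((intervalIntegrable_iff_integrableOn_Ioc_of_le hu0).1
          (key3 _ hu0 huτ)).aestronglyMeasurable
    have hintIoc : MeasureTheory.IntegrableOn h (Ioc 0 τ) volume := by
      have hIoo : MeasureTheory.IntegrableOn h (Ioo 0 τ) volume := by
        refine MeasureTheory.Integrable.mono' (MeasureTheory.integrable_const C) hmeasIoo ?_
        refine (MeasureTheory.ae_restrict_iff' measurableSet_Ioo).2 (MeasureTheory.ae_of_all _ ?_)
        intro x hx
        rw [Real.norm_eq_abs]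
        exact hhbnd x hx.1.le (by linarith [hx.2])
      unfold MeasureTheory.IntegrableOn at hIoo ⊢
      rwa [← MeasureTheory.Measure.restrict_congr_set MeasureTheory.Ioo_ae_eq_Ioc]
    have hconst : MeasureTheory.IntegrableOn h (Ioc τ (τ+1)) volume := by
      have h0 : MeasureTheory.IntegrableOn (fun _ : ℝ => M 0 * (c - b * M 0))
          (Ioc τ (τ+1)) volume :=
        MeasureTheory.integrableOn_const measure_Ioc_lt_top.ne
      refine h0.congr_fun (fun x hx => ?_) measurableSet_Ioc
      simp only [hh]
      rw [key2 x hx.1]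
    have hfinal : IntervalIntegrable h volume 0 (τ+1) := by
      rw [intervalIntegrable_iff_integrableOn_Ioc_of_le (by linarith)]
      rw [← Set.Ioc_union_Ioc_eq_Ioc hτ0 (by linarith : τ ≤ τ+1)]
      exact hintIoc.union hconst
    exact key1 (τ+1) (by linarith) hfinal
  have hMcont : ContinuousOn M (Ici 0) := by
    intro t ht
    have ht' : (0:ℝ) ≤ t := ht
    set T : ℝ := t + 1 with hT
    set R : ℝ := M 0 + T * (c^2/(4*b)) with hRdef
    have hq : (0:ℝ) ≤ c^2/(4*b) := by positivity
    have hMR : ∀ s ∈ Icc (0:ℝ) T, M s ≤ R := by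
      intro s hs
      refine (boundM s hs.1).trans ?_
      have := mul_le_mul_of_nonneg_right hs.2 hq
      simp only [hRdef]; linarith
    set C : ℝ := R * (c + b * R) with hCdef
    have hC0 : 0 ≤ C := by
      have hR0 : 0 < R := by
        have : 0 ≤ T * (c^2/(4*b)) := by
          apply mul_nonneg _ hq
          simp only [hT]; linarith [ht']
        simp only [hRdef]; linarith
      positivity
    have hlip : LipschitzOnWith C.toNNReal M (Icc 0 T) := by
      rw [lipschitzOnWith_iff_dist_le_mul]
      intro x hx y hy
      rw [Real.dist_eq, Real.dist_eq, Real.coe_toNNReal _ hC0]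
      have h1 : M x - M y = ∫ u in y..x, h u := by
        rw [heq x hx.1, heq y hy.1, add_sub_add_left_eq_sub]
        exact intervalIntegral.integral_interval_sub_left (hint x hx.1) (hint y hy.1)
      rw [h1]
      have hbound : ∀ u ∈ Set.uIoc y x, ‖h u‖ ≤ C := by
        intro u hu
        rw [Set.mem_uIoc] at hu
        rw [Real.norm_eq_abs]
        have hu0 : 0 ≤ u := by
          rcases hu with h' | h' <;> [exact le_trans hy.1 h'.1.le; exact le_trans hx.1 h'.1.le]
        have huT : u ≤ T := by
          rcases hu with h' | h' <;> [exact le_trans h'.2 hx.2; exact le_trans h'.2 hy.2]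
        exact quad_abs_le hc hb (hMnn u) ((boundM u hu0).trans (by
          have := mul_le_mul_of_nonneg_right huT hq
          simp only [hRdef]; linarith))
      have hnorm := intervalIntegral.norm_integral_le_of_norm_le_const hbound
      calc |∫ u in y..x, h u| = ‖∫ u in y..x, h u‖ := (Real.norm_eq_abs _).symm
        _ ≤ C * |x - y| := hnorm
    have hcont : ContinuousOn M (Icc 0 T) := hlip.continuousOn
    have hmem : Icc (0:ℝ) T ∈ 𝓝[Ici 0] t := by
      rw [← Set.Ici_inter_Iic]
      exact Filter.inter_mem self_mem_nhdsWithin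
        (mem_nhdsWithin_of_mem_nhds (Iic_mem_nhds (by simp only [hT]; linarith)))
    exact (hcont t ⟨ht, by simp only [hT]; linarith⟩).mono_of_mem_nhdsWithin hmem
  have hhcont : ContinuousOn h (Ici 0) := by
    have hg : Continuous fun x : ℝ => x * (c - b * x) :=
      continuous_id.mul (continuous_const.sub (continuous_const.mul continuous_id))
    exact hg.comp_continuousOn hMcont
  have hMderiv : ∀ t, 0 ≤ t → HasDerivWithinAt M (h t) (Ici t) t := by
    intro t ht
    have hIciSub : Ici t ⊆ Ici 0 := Ici_subset_Ici.2 ht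
    have hmem : Ici (0:ℝ) ∈ 𝓝[>] t :=
      Filter.mem_of_superset self_mem_nhdsWithin (Ioi_subset_Ici_self.trans hIciSub)
    have hsmaf : StronglyMeasurableAtFilter h (𝓝[>] t) volume :=
      ⟨Ici 0, hmem, hhcont.aestronglyMeasurable measurableSet_Ici⟩
    have hcw : ContinuousWithinAt h (Ioi t) t :=
      (hhcont t ht).mono (Ioi_subset_Ici_self.trans hIciSub)
    have hP : HasDerivWithinAt (fun u => M 0 + ∫ s in (0:ℝ)..u, h s) (h t) (Ici t) t :=
      (intervalIntegral.integral_hasDerivWithinAt_right (hint t ht) hsmaf hcw).const_add (M 0)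
    exact hP.congr (fun u hu => heq u (le_trans ht hu)) (heq t ht)
  intro t ht
  set R' : ℝ := max (M 0 + t * (c^2/(4*b))) (max (c/b) (M 0)) with hR'
  have hR'0 : 0 < R' := lt_of_lt_of_le hM0 (le_trans (le_max_right _ _) (le_max_right _ _))
  set Kl : NNReal := (c + 2*b*R').toNNReal with hKldef
  have hKl : (Kl : ℝ) = c + 2*b*R' := Real.coe_toNNReal _ (by positivity)
  have hv : ∀ s : ℝ, LipschitzOnWith Kl (fun x => x * (c - b*x)) (Icc 0 R') := by
    intro s
    rw [lipschitzOnWith_iff_dist_le_mul]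
    intro x hx y hy
    rw [Real.dist_eq, Real.dist_eq, hKl]
    have hfactor : x * (c - b*x) - y * (c - b*y) = (x - y) * (c - b*(x+y)) := by ring
    rw [hfactor, abs_mul]
    have habs : |c - b*(x+y)| ≤ c + 2*b*R' := by
      rw [abs_le]
      constructor <;> nlinarith [hx.1, hx.2, hy.1, hy.2]
    calc |x-y| * |c - b*(x+y)| ≤ |x-y| * (c+2*b*R') :=
          mul_le_mul_of_nonneg_left habs (abs_nonneg _)
      _ = (c+2*b*R') * |x-y| := mul_comm _ _
  have hq : (0:ℝ) ≤ c^2/(4*b) := by positivity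
  have huniq := ODE_solution_unique_of_mem_Icc_right (v := fun _ x => x * (c - b*x))
      (s := fun _ => Icc 0 R') (K := Kl) (fun s _ => hv s)
      (f := M) (g := logi c b (M 0)) (a := 0) (b := t)
      (hMcont.mono Icc_subset_Ici_self)
      (fun u hu => hMderiv u hu.1)
      (fun u hu => ⟨hMnn u, (boundM u hu.1).trans (le_trans (by
        have := mul_le_mul_of_nonneg_right hu.2.le hq
        linarith) (le_max_left _ _))⟩)
      (fun u hu => ((logi_hasDeriv hc hb hM0 hu.1).continuousAt).continuousWithinAt)
      (fun u hu => (logi_hasDeriv hc hb hM0 hu.1).hasDerivWithinAt)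
      (fun u hu => ⟨logi_nonneg hc hb hM0 hu.1,
        (logi_le hc hb hM0 hu.1).trans (le_max_right _ _)⟩)
      ((logi_zero hc).symm)
  exact huniq ⟨ht, le_rfl⟩

end LogisticAux

open Set in
lemma assort_integral {E : Type*} [MeasurableSpace E] (F : Set E)
    (a : E → E → ℝ) (hsym : ∀ x y, a x y = a y x)
    (hameas : Measurable (fun q : E × E => a q.1 q.2))
    (al au : ℝ) (hal : 0 < al) (hbound : ∀ x ∈ F, ∀ y ∈ F, al ≤ a x y ∧ a x y ≤ au)
    (ms : Measure E) [IsFiniteMeasure ms] (hconc : ms Fᶜ = 0) :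
    ∫ x, ∫ y, assortativeRate a x y ms ∂ms ∂ms = (ms univ).toReal := by
  rcases eq_or_ne ms 0 with h0 | hne
  · simp [h0]
  set Ms : ℝ := (ms univ).toReal with hMsdef
  have hMs : 0 < Ms := ENNReal.toReal_pos (fun h => hne (Measure.measure_univ_eq_zero.1 h))
    (measure_ne_top _ _)
  have hFae : ∀ᵐ x ∂ms, x ∈ F := by
    rw [MeasureTheory.ae_iff]
    exact hconc
  have hsec_meas : ∀ x, Measurable (fun r => a x r) :=
    fun x => hameas.comp measurable_prodMk_left
  have hint_sec : ∀ x ∈ F, Integrable (fun r => a x r) ms := by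
    intro x hx
    refine Integrable.mono' (integrable_const au) (hsec_meas x).aestronglyMeasurable ?_
    filter_upwards [hFae] with r hr
    rw [Real.norm_eq_abs, abs_of_nonneg (le_trans hal.le (hbound x hx r hr).1)]
    exact (hbound x hx r hr).2
  set A : E → ℝ := fun x => ∫ r, a x r ∂ms with hAdef
  have hA_lb : ∀ x ∈ F, al * Ms ≤ A x := by
    intro x hx
    have h1 : (∫ _r, al ∂ms) ≤ A x := by
      refine integral_mono_ae (integrable_const al) (hint_sec x hx) ?_
      filter_upwards [hFae] with r hr
      exact (hbound x hx r hr).1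
    rwa [MeasureTheory.integral_const, smul_eq_mul, mul_comm] at h1
  have hA_pos : ∀ x ∈ F, 0 < A x := fun x hx => lt_of_lt_of_le (by positivity) (hA_lb x hx)
  have hAmeas : StronglyMeasurable A :=
    hameas.stronglyMeasurable.integral_prod_right'
  set g : E × E → ℝ := fun q => a q.1 q.2 / (2 * A q.2) with hgdef
  have hprod_null : (ms.prod ms) ((F ×ˢ F)ᶜ) = 0 := by
    have hsub : (F ×ˢ F)ᶜ ⊆ (Fᶜ ×ˢ univ) ∪ (univ ×ˢ Fᶜ) := by
      intro q hq
      rw [Set.mem_compl_iff, Set.mem_prod, not_and_or] at hq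
      rcases hq with h | h
      · exact Or.inl ⟨h, mem_univ _⟩
      · exact Or.inr ⟨mem_univ _, h⟩
    refine measure_mono_null hsub (le_antisymm ((measure_union_le _ _).trans ?_) (by simp))
    rw [Measure.prod_prod, Measure.prod_prod, hconc]
    simp
  have hq_ae : ∀ᵐ q ∂(ms.prod ms), q.1 ∈ F ∧ q.2 ∈ F := by
    rw [MeasureTheory.ae_iff]
    refine measure_mono_null ?_ hprod_null
    intro q hq
    rw [Set.mem_setOf_eq, not_and_or] at hq
    rw [Set.mem_compl_iff, Set.mem_prod, not_and_or]
    exact hq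
  have hgbound : ∀ x ∈ F, ∀ y ∈ F, |a x y / (2 * A y)| ≤ au / (2 * (al * Ms)) := by
    intro x hx y hy
    have h1 : 0 ≤ a x y := le_trans hal.le (hbound x hx y hy).1
    have h2 : 0 < 2 * (al * Ms) := by positivity
    have h3 : 2 * (al * Ms) ≤ 2 * A y := by linarith [hA_lb y hy]
    rw [abs_of_nonneg (div_nonneg h1 (by linarith [hA_pos y hy]))]
    exact div_le_div₀ (le_trans h1 (hbound x hx y hy).2) (hbound x hx y hy).2 h2 h3
  have hgmeas : AEStronglyMeasurable g (ms.prod ms) := by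
    have : Measurable g := hameas.div (measurable_const.mul
      (hAmeas.measurable.comp measurable_snd))
    exact this.aestronglyMeasurable
  have hgint : Integrable g (ms.prod ms) := by
    refine Integrable.mono' (integrable_const (au / (2 * (al * Ms)))) hgmeas ?_
    filter_upwards [hq_ae] with q hq
    rw [Real.norm_eq_abs]
    exact hgbound q.1 hq.1 q.2 hq.2
  have hinner : ∀ x ∈ F, (∫ y, assortativeRate a x y ms ∂ms)
      = 1/2 + ∫ y, a x y / (2 * A y) ∂ms := by
    intro x hx
    have hia : Integrable (fun y => a x y / (2 * A x)) ms := (hint_sec x hx).div_const _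
    have hib : Integrable (fun y => a x y / (2 * A y)) ms := by
      refine Integrable.mono' (integrable_const (au / (2 * (al * Ms))))
        ((hsec_meas x).div (measurable_const.mul hAmeas.measurable)).aestronglyMeasurable ?_
      filter_upwards [hFae] with y hy
      rw [Real.norm_eq_abs]
      exact hgbound x hx y hy
    have hsplit : (∫ y, assortativeRate a x y ms ∂ms)
        = (∫ y, a x y / (2 * A x) ∂ms) + ∫ y, a x y / (2 * A y) ∂ms := by
      rw [← integral_add hia hib]
      rfl
    rw [hsplit]
    congr 1
    rw [MeasureTheory.integral_div]
    have : A x ≠ 0 := ne_of_gt (hA_pos x hx)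
    field_simp
    ring
  have houter : (∫ x, ∫ y, assortativeRate a x y ms ∂ms ∂ms)
      = (∫ _x, (1:ℝ)/2 ∂ms) + ∫ x, ∫ y, a x y / (2 * A y) ∂ms ∂ms := by
    rw [← integral_add (integrable_const _) hgint.integral_prod_left]
    refine integral_congr_ae ?_
    filter_upwards [hFae] with x hx
    exact hinner x hx
  have hswap : (∫ x, ∫ y, a x y / (2 * A y) ∂ms ∂ms)
      = ∫ y, ∫ x, a x y / (2 * A y) ∂ms ∂ms :=
    integral_integral_swap hgint
  have hsecond : (∫ y, ∫ x, a x y / (2 * A y) ∂ms ∂ms) = ∫ _y, (1:ℝ)/2 ∂ms := by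
    refine integral_congr_ae ?_
    filter_upwards [hFae] with y hy
    have h1 : (∫ x, a x y / (2 * A y) ∂ms) = (∫ x, a x y ∂ms) / (2 * A y) :=
      MeasureTheory.integral_div _ _
    have h2 : (∫ x, a x y ∂ms) = A y := by
      simp only [hAdef]
      refine integral_congr_ae (MeasureTheory.ae_of_all _ fun x => ?_)
      exact hsym x y
    rw [h1, h2]
    have : A y ≠ 0 := ne_of_gt (hA_pos y hy)
    field_simp
  rw [houter, hswap, hsecond, MeasureTheory.integral_const, smul_eq_mul]
  rw [show ms.real univ = Ms from rfl]
  ring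

open Set in
/-- The integrand of the total-mass evolution equation is logistic. -/
lemma mass_integrand {E : Type*} [MeasurableSpace E] (F : Set E)
    (K : E → E → Measure E) (hKprob : ∀ x y, IsProbabilityMeasure (K x y))
    (p D I U : ℝ) (hppos : 0 < p)
    (m : E → E → Measure E → ℝ)
    (hcase : m = semiRandomRate (fun _ => p) ∨
      (p = 1 ∧ ∃ a : E → E → ℝ, (∀ x y, a x y = a y x) ∧
        Measurable (fun q : E × E => a q.1 q.2) ∧
        (∃ al au : ℝ, 0 < al ∧ (∀ x ∈ F, ∀ y ∈ F, al ≤ a x y ∧ a x y ≤ au)) ∧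
        m = assortativeRate a))
    (ms : Measure E) [IsFiniteMeasure ms] (hconc : ms Fᶜ = 0) :
    (∫ x, ∫ y, m x y ms * ∫ _z, (1:ℝ) ∂(K x y) ∂ms ∂ms)
      - (∫ _x, (1:ℝ) * (D + I * ∫ _y, U ∂ms) ∂ms)
    = (ms univ).toReal * ((p - D) - (I * U) * (ms univ).toReal) := by
  have hK1 : ∀ x y : E, (∫ _z, (1:ℝ) ∂(K x y)) = 1 := fun x y => by
    haveI := hKprob x y
    simp
  simp only [hK1, mul_one, one_mul]
  set Ms : ℝ := (ms univ).toReal with hMsdef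
  have hU : (∫ _y, U ∂ms) = Ms * U := by
    rw [MeasureTheory.integral_const, smul_eq_mul]
    rfl
  have hdeath : (∫ _x, (D + I * ∫ _y, U ∂ms) ∂ms) = Ms * (D + I * (Ms * U)) := by
    rw [hU, MeasureTheory.integral_const, smul_eq_mul]
    rfl
  rw [hdeath]
  rcases hcase with hsr | ⟨hp1, a, hsym, hameas, ⟨al, au, hal, hbound⟩, hma⟩
  · rw [hsr]
    have hpint : (∫ z, (fun _ : E => p) z ∂ms) = Ms * p := by
      rw [MeasureTheory.integral_const, smul_eq_mul]
      rfl
    have hmval : ∀ x y : E, semiRandomRate (fun _ => p) x y ms = p * p / (Ms * p) := by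
      intro x y
      rw [semiRandomRate]
      rw [hpint]
    simp only [hmval]
    rw [MeasureTheory.integral_const (c := ∫ _y, p * p / (Ms * p) ∂ms),
      MeasureTheory.integral_const, smul_eq_mul, smul_eq_mul]
    rcases eq_or_ne Ms 0 with hMs0 | hMs0
    · simp [hMs0]
    · have hp0 : p ≠ 0 := ne_of_gt hppos
      rw [show ms.real univ = Ms from rfl]
      field_simp
      ring
  · rw [hma, hp1]
    rw [assort_integral F a hsym hameas al au hal hbound ms hconc]
    rw [← hMsdef]
    ring

/-- Stabilization of the population size and the global
attractor `𝒜`.  If `p, D, I, U` are positive constants with `D < p` in the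
semi-random case (resp. `D < 1 =: p` in the assortative case), then every
solution with positive initial mass satisfies
`lim_{t→∞} μ_t(F) = (p − D)/(IU)`; moreover the set
`𝒜 = {μ : μ(F) = (p−D)/(IU)}` is invariant under the equation. -/
theorem mass_stabilization_and_attractor
    {d : ℕ} (F : Set (EuclideanSpace ℝ (Fin d)))
    (hFclosed : IsClosed F) (hFconn : IsConnected F)
    (hFint : (interior F).Nonempty)
    (K : EuclideanSpace ℝ (Fin d) → EuclideanSpace ℝ (Fin d) →
      Measure (EuclideanSpace ℝ (Fin d)))
    (hKprob : ∀ x y, IsProbabilityMeasure (K x y))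
    (hKsupp : ∀ x ∈ F, ∀ y ∈ F, K x y Fᶜ = 0)
    (hKsymm : ∀ x y, K x y = K y x)
    (hKmeas : ∀ A : Set (EuclideanSpace ℝ (Fin d)), MeasurableSet A →
      Measurable (fun q : EuclideanSpace ℝ (Fin d) × EuclideanSpace ℝ (Fin d) =>
        K q.1 q.2 A))
    -- constant coefficients
    (p D I U : ℝ)
    (hppos : 0 < p) (hDpos : 0 < D) (hIpos : 0 < I) (hUpos : 0 < U)
    (m : EuclideanSpace ℝ (Fin d) → EuclideanSpace ℝ (Fin d) →
      Measure (EuclideanSpace ℝ (Fin d)) → ℝ)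
    -- either semi-random mating with D < p, or assortative mating with D < 1 =: p
    (hcase :
      (D < p ∧ m = semiRandomRate (fun _ => p)) ∨
      (p = 1 ∧ D < 1 ∧ ∃ a : EuclideanSpace ℝ (Fin d) → EuclideanSpace ℝ (Fin d) → ℝ,
        (∀ x y, a x y = a y x) ∧
        Measurable (fun q : EuclideanSpace ℝ (Fin d) × EuclideanSpace ℝ (Fin d) => a q.1 q.2) ∧
        (∃ al au : ℝ, 0 < al ∧ (∀ x ∈ F, ∀ y ∈ F, al ≤ a x y ∧ a x y ≤ au)) ∧
        m = assortativeRate a))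
    (μ₀ : Measure (EuclideanSpace ℝ (Fin d)))
    (hμ₀fin : IsFiniteMeasure μ₀) (hμ₀supp : μ₀ Fᶜ = 0)
    (hμ₀pos : 0 < μ₀ F)
    (μ : ℝ → Measure (EuclideanSpace ℝ (Fin d)))
    (hμ : IsMildSolution F m K (fun _ => D) (fun _ => I) (fun _ _ => U) μ₀ μ) :
    -- the total mass converges to the carrying capacity (p − D)/(IU),
    -- i.e. every solution with positive initial mass converges to the set 𝒜
    Tendsto (fun t => (μ t F).toReal) atTop (nhds ((p - D) / (I * U))) ∧
    -- the set 𝒜 = {μ : μ(F) = (p−D)/(IU)} is invariant under the equation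
    (∀ (ν₀ : Measure (EuclideanSpace ℝ (Fin d)))
        (ν : ℝ → Measure (EuclideanSpace ℝ (Fin d))),
      IsFiniteMeasure ν₀ → ν₀ Fᶜ = 0 →
      IsMildSolution F m K (fun _ => D) (fun _ => I) (fun _ _ => U) ν₀ ν →
      ν₀ F = ENNReal.ofReal ((p - D) / (I * U)) →
      ∀ t : ℝ, 0 ≤ t → ν t F = ENNReal.ofReal ((p - D) / (I * U))) := by
  classical
  obtain ⟨hμ0eq, hμfin, hμweak⟩ := hμ
  have hDp : D < p := by
    rcases hcase with ⟨h, _⟩ | ⟨hp1, hD1, _⟩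
    · exact h
    · rw [hp1]; exact hD1
  have mcase : m = semiRandomRate (fun _ => p) ∨
      (p = 1 ∧ ∃ a : EuclideanSpace ℝ (Fin d) → EuclideanSpace ℝ (Fin d) → ℝ,
        (∀ x y, a x y = a y x) ∧
        Measurable (fun q : EuclideanSpace ℝ (Fin d) × EuclideanSpace ℝ (Fin d) => a q.1 q.2) ∧
        (∃ al au : ℝ, 0 < al ∧ (∀ x ∈ F, ∀ y ∈ F, al ≤ a x y ∧ a x y ≤ au)) ∧
        m = assortativeRate a) := by
    rcases hcase with ⟨_, h⟩ | ⟨hp1, _, a, h1, h2, h3, h4⟩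
    · exact Or.inl h
    · exact Or.inr ⟨hp1, a, h1, h2, h3, h4⟩
  set c : ℝ := p - D with hcdef
  set bb : ℝ := I * U with hbbdef
  have hc : 0 < c := sub_pos.2 hDp
  have hbb : 0 < bb := mul_pos hIpos hUpos
  have hFmeas : MeasurableSet F := hFclosed.measurableSet
  have key : ∀ (ν₀ : Measure (EuclideanSpace ℝ (Fin d)))
      (ν : ℝ → Measure (EuclideanSpace ℝ (Fin d))),
      IsMildSolution F m K (fun _ => D) (fun _ => I) (fun _ _ => U) ν₀ ν →
      0 < ν₀ F →
      ∀ t : ℝ, 0 ≤ t →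
        ((ν t) Set.univ).toReal = logi c bb ((ν₀ Set.univ).toReal) t ∧
        (ν t) Set.univ = (ν t) F := by
    intro ν₀ ν hν hν₀pos
    obtain ⟨hν0eq, hνfin, hνweak⟩ := hν
    have huniv : ∀ t : ℝ, 0 ≤ t → (ν t) Set.univ = (ν t) F := by
      intro t ht
      rw [← measure_add_measure_compl hFmeas, (hνfin t ht).2, add_zero]
    set M : ℝ → ℝ := fun t => ((ν t) Set.univ).toReal with hMdef
    have hν₀fin' : IsFiniteMeasure ν₀ := by
      have := (hνfin 0 le_rfl).1
      rwa [hν0eq] at this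
    have hM0val : M 0 = (ν₀ Set.univ).toReal := by simp only [hMdef, hν0eq]
    have hM0pos : 0 < M 0 := by
      rw [hM0val]
      haveI := hν₀fin'
      refine ENNReal.toReal_pos ?_ (measure_ne_top _ _)
      intro h
      have h2 : ν₀ F = 0 := measure_mono_null (Set.subset_univ F) h
      exact absurd h2 (ne_of_gt hν₀pos)
    have hMnn : ∀ t, 0 ≤ M t := fun t => ENNReal.toReal_nonneg
    have heqM : ∀ t, 0 ≤ t → M t = M 0 + ∫ s in (0:ℝ)..t, M s * (c - bb * M s) := by
      intro t ht
      have h1 : (∫ _x, (1:ℝ) ∂(ν t)) = (∫ _x, (1:ℝ) ∂ν₀)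
          + ∫ s in (0:ℝ)..t,
              ((∫ x, ∫ y, m x y (ν s) * ∫ _z, (1:ℝ) ∂(K x y) ∂(ν s) ∂(ν s))
                - ∫ _x, (1:ℝ) * (D + I * ∫ _y, U ∂(ν s)) ∂(ν s)) :=
        hνweak (fun _ => (1:ℝ)) measurable_const ⟨1, fun x => by norm_num⟩ t ht
      have h2 : (∫ s in (0:ℝ)..t,
            ((∫ x, ∫ y, m x y (ν s) * ∫ _z, (1:ℝ) ∂(K x y) ∂(ν s) ∂(ν s))
              - ∫ _x, (1:ℝ) * (D + I * ∫ _y, U ∂(ν s)) ∂(ν s)))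
          = ∫ s in (0:ℝ)..t, M s * (c - bb * M s) := by
        refine intervalIntegral.integral_congr ?_
        intro s hs
        rw [Set.uIcc_of_le ht] at hs
        haveI := (hνfin s hs.1).1
        exact mass_integrand F K hKprob p D I U hppos m mcase (ν s) ((hνfin s hs.1).2)
      rw [h2] at h1
      have h3 : (∫ _x, (1:ℝ) ∂(ν t)) = M t := by
        rw [MeasureTheory.integral_const, smul_eq_mul, mul_one]
        rfl
      have h4 : (∫ _x, (1:ℝ) ∂ν₀) = M 0 := by
        rw [MeasureTheory.integral_const, smul_eq_mul, mul_one, hM0val]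
        rfl
      rw [h3, h4] at h1
      exact h1
    have hsol := mass_ode hc hbb M hMnn hM0pos heqM
    intro t ht
    refine ⟨?_, huniv t ht⟩
    rw [← hM0val]
    exact hsol t ht
  constructor
  · have hkey := key μ₀ μ ⟨hμ0eq, hμfin, hμweak⟩ hμ₀pos
    have hM0pos : 0 < (μ₀ Set.univ).toReal := by
      haveI := hμ₀fin
      refine ENNReal.toReal_pos ?_ (measure_ne_top _ _)
      intro h
      exact absurd (measure_mono_null (Set.subset_univ F) h) (ne_of_gt hμ₀pos)
    have hlim : Tendsto (logi c bb ((μ₀ Set.univ).toReal)) atTop (nhds (c / bb)) :=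
      logi_tendsto hc hbb hM0pos
    have heq' : (fun t => ((μ t) F).toReal) =ᶠ[atTop]
        (logi c bb ((μ₀ Set.univ).toReal)) := by
      filter_upwards [eventually_ge_atTop (0:ℝ)] with t ht
      have h := hkey t ht
      rw [← h.2, h.1]
    have hconv : Tendsto (fun t => ((μ t) F).toReal) atTop (nhds (c / bb)) :=
      hlim.congr' heq'.symm
    simpa [hcdef, hbbdef] using hconv
  · intro ν₀ ν hν₀fin hν₀supp hν hν₀mass t ht
    have hKcpos : 0 < (p - D) / (I * U) := div_pos hc hbb
    have hν₀pos : 0 < ν₀ F := by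
      rw [hν₀mass]
      exact ENNReal.ofReal_pos.2 hKcpos
    have hkey := key ν₀ ν hν hν₀pos
    have huniv0 : ν₀ Set.univ = ν₀ F := by
      rw [← measure_add_measure_compl hFmeas, hν₀supp, add_zero]
    have hmass0 : (ν₀ Set.univ).toReal = c / bb := by
      rw [huniv0, hν₀mass, ENNReal.toReal_ofReal hKcpos.le]
    have hNt := (hkey t ht).1
    rw [hmass0, logi_fixed hc hbb] at hNt
    have hfin : ν t Set.univ ≠ ⊤ := by
      haveI := (hν.2.1 t ht).1
      exact measure_ne_top _ _
    have hval : ν t Set.univ = ENNReal.ofReal ((p - D) / (I * U)) := by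
      rw [← ENNReal.ofReal_toReal hfin, hNt]
    rw [← (hkey t ht).2, hval]


end
end

section
/- Let Z be a random variable on ℝ with E Z = 0 and E Z² < ∞, having density h, and let K(x,y,·) be the law of (x+y)/2 + Z, i.e. K(x,y,dz) = h(z − (x+y)/2) dz. Then for every Borel probability measure μ on ℝ with finite second moment and first moment q, the measure 𝒫μ satisfies ∫ z² (𝒫μ)(dz) ≤ E Z² + q²/2 + (1/2) ∫ x² μ(dx). In particular condition (ii) of the asymptotic stability theorem holds with α = 2, L = 1/2 and C = E Z² + q²/2. -/
open MeasureTheory Filter ENNReal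

noncomputable section

/-- inner moment computation for the shifted density -/
lemma inner_lintegral
    (h : ℝ → ℝ) (hmeas : Measurable h) (hnonneg : ∀ z, 0 ≤ h z)
    (hint : (∫ z, h z) = 1) (hIntegrable : Integrable h volume)
    (hmean : (∫ z, z * h z) = 0)
    (hmeanInt : Integrable (fun z => z * h z) volume)
    (hsqInt : Integrable (fun z => z ^ 2 * h z) volume)
    (c : ℝ) :
    ∫⁻ z, ENNReal.ofReal (z ^ 2)
        ∂(volume.withDensity (fun z => ENNReal.ofReal (h (z - c))))
      = ENNReal.ofReal ((∫ z, z ^ 2 * h z) + c ^ 2) := by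
  rw [lintegral_withDensity_eq_lintegral_mul _
    (by exact (ENNReal.measurable_ofReal.comp (hmeas.comp (measurable_id.sub measurable_const))))
    (by exact ENNReal.measurable_ofReal.comp ((measurable_id.pow_const 2)))]
  have key : ∀ z : ℝ, (ENNReal.ofReal (h (z - c)) * ENNReal.ofReal (z ^ 2))
      = (fun w => ENNReal.ofReal (h w * (w + c) ^ 2)) (z - c) := by
    intro z
    simp only
    rw [← ENNReal.ofReal_mul (hnonneg _), sub_add_cancel]
  simp only [Pi.mul_apply, key]
  rw [lintegral_sub_right_eq_self (fun w => ENNReal.ofReal (h w * (w + c) ^ 2)) c]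
  have hInt : Integrable (fun w => h w * (w + c) ^ 2) volume := by
    have : (fun w => h w * (w + c) ^ 2)
        = fun w => w ^ 2 * h w + (2 * c) * (w * h w) + c ^ 2 * h w := by
      funext w; ring
    rw [this]
    exact ((hsqInt.add ((hmeanInt.const_mul (2 * c)))).add (hIntegrable.const_mul (c ^ 2)))
  rw [← ofReal_integral_eq_lintegral_ofReal hInt
    (Filter.Eventually.of_forall fun w => mul_nonneg (hnonneg w) (sq_nonneg _))]
  congr 1
  have : (fun w => h w * (w + c) ^ 2)
      = fun w => w ^ 2 * h w + (2 * c) * (w * h w) + c ^ 2 * h w := by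
    funext w; ring
  have I1 : Integrable (fun w => w ^ 2 * h w + 2 * c * (w * h w)) volume :=
    hsqInt.add (hmeanInt.const_mul (2 * c))
  rw [this, integral_add I1 (hIntegrable.const_mul (c ^ 2)),
    integral_add hsqInt (hmeanInt.const_mul (2 * c)), integral_const_mul, integral_const_mul,
    hmean, hint]
  ring

/-- The operator `𝒫`. -/
def Pop (K : ℝ → ℝ → Measure ℝ) (μ : Measure ℝ) : Measure ℝ :=
  (μ.prod μ).bind fun q => K q.1 q.2

/-- Example: additive noise, second-moment bound.
Let `Z` have mean `0`, `E Z² < ∞` and density `h`, and let `K(x,y,·)` be the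
law of `(x+y)/2 + Z`, i.e. `K(x,y,dz) = h(z − (x+y)/2) dz`.  Then for every
Borel probability measure `μ` on `ℝ` with finite second moment and first
moment `q`, `∫ z² (𝒫μ)(dz) ≤ E Z² + q²/2 + (1/2) ∫ x² μ(dx)`; i.e. condition
(ii) of the asymptotic stability theorem holds with `α = 2`, `L = 1/2`,
`C = E Z² + q²/2`. -/
theorem additive_noise_second_moment_bound
    (h : ℝ → ℝ) (hmeas : Measurable h) (hnonneg : ∀ z, 0 ≤ h z)
    (hint : (∫ z, h z) = 1) (hIntegrable : Integrable h volume)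
    (hmean : (∫ z, z * h z) = 0)
    (hmeanInt : Integrable (fun z => z * h z) volume)
    (hsqInt : Integrable (fun z => z ^ 2 * h z) volume)
    (K : ℝ → ℝ → Measure ℝ)
    (hK : ∀ x y, K x y =
      volume.withDensity (fun z => ENNReal.ofReal (h (z - (x + y) / 2))))
    (q : ℝ) :
    ∀ μ : Measure ℝ, IsProbabilityMeasure μ →
      Integrable (fun z => z) μ → Integrable (fun z => z ^ 2) μ →
      (∫ z, z ∂μ) = q →
      (∫ z, z ^ 2 ∂(Pop K μ))
        ≤ (∫ z, z ^ 2 * h z) + q ^ 2 / 2 + (1 / 2) * ∫ x, x ^ 2 ∂μ := by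
  intro μ hprob hint1 hint2 hq
  haveI := hprob
  set EZ : ℝ := ∫ z, z ^ 2 * h z with hEZ
  have hEZ0 : 0 ≤ EZ :=
    integral_nonneg fun z => mul_nonneg (sq_nonneg z) (hnonneg z)
  have hm2 : 0 ≤ ∫ x, x ^ 2 ∂μ := integral_nonneg fun x => sq_nonneg x
  -- measurability of the kernel
  have hKm : Measurable (fun p : ℝ × ℝ => K p.1 p.2) := by
    apply Measure.measurable_of_measurable_coe
    intro s hs
    have jm : Measurable (fun pz : (ℝ × ℝ) × ℝ =>
        (s.indicator (1 : ℝ → ℝ≥0∞) pz.2) *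
          ENNReal.ofReal (h (pz.2 - (pz.1.1 + pz.1.2) / 2))) := by
      apply Measurable.mul
      · exact (measurable_one.indicator hs).comp measurable_snd
      · exact ENNReal.measurable_ofReal.comp (hmeas.comp (measurable_snd.sub
          (((measurable_fst.comp measurable_fst).add
            (measurable_snd.comp measurable_fst)).div_const 2)))
    have key : Measurable fun p : ℝ × ℝ => ∫⁻ z, (s.indicator (1 : ℝ → ℝ≥0∞) z) *
        ENNReal.ofReal (h (z - (p.1 + p.2) / 2)) ∂volume := jm.lintegral_prod_right'
    have eq1 : (fun p : ℝ × ℝ => (K p.1 p.2) s)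
        = fun p : ℝ × ℝ => ∫⁻ z, (s.indicator (1 : ℝ → ℝ≥0∞) z) *
            ENNReal.ofReal (h (z - (p.1 + p.2) / 2)) := by
      funext p
      rw [hK, withDensity_apply _ hs, ← lintegral_indicator hs]
      congr 1
      funext z
      by_cases hz : z ∈ s <;> simp [hz]
    rw [eq1]
    exact key
  -- lintegral over the bind
  have hsq : Measurable (fun z : ℝ => ENNReal.ofReal (z ^ 2)) :=
    ENNReal.measurable_ofReal.comp (measurable_id.pow_const 2)
  have step1 : ∫⁻ z, ENNReal.ofReal (z ^ 2) ∂(Pop K μ)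
      = ∫⁻ p, ∫⁻ z, ENNReal.ofReal (z ^ 2) ∂(K p.1 p.2) ∂(μ.prod μ) := by
    exact Measure.lintegral_bind hKm.aemeasurable hsq.aemeasurable
  have step2 : ∀ p : ℝ × ℝ, ∫⁻ z, ENNReal.ofReal (z ^ 2) ∂(K p.1 p.2)
      = ENNReal.ofReal (EZ + ((p.1 + p.2) / 2) ^ 2) := by
    intro p
    rw [hK]
    exact inner_lintegral h hmeas hnonneg hint hIntegrable hmean hmeanInt hsqInt _
  -- integrability on the product measure
  have Ia : Integrable (fun p : ℝ × ℝ => p.1 ^ 2 * 1) (μ.prod μ) :=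
    hint2.mul_prod (integrable_const 1)
  have Ib : Integrable (fun p : ℝ × ℝ => p.1 * p.2) (μ.prod μ) :=
    hint1.mul_prod hint1
  have Ic : Integrable (fun p : ℝ × ℝ => 1 * p.2 ^ 2) (μ.prod μ) :=
    (integrable_const 1).mul_prod hint2
  have feq : (fun p : ℝ × ℝ => EZ + ((p.1 + p.2) / 2) ^ 2)
      = fun p : ℝ × ℝ => EZ + ((1 / 4) * (p.1 ^ 2 * 1)
          + (1 / 2) * (p.1 * p.2) + (1 / 4) * (1 * p.2 ^ 2)) := by
    funext p; ring
  have Isum : Integrable (fun p : ℝ × ℝ => (1 / 4 : ℝ) * (p.1 ^ 2 * 1)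
      + (1 / 2) * (p.1 * p.2) + (1 / 4) * (1 * p.2 ^ 2)) (μ.prod μ) :=
    ((Ia.const_mul _).add (Ib.const_mul _)).add (Ic.const_mul _)
  have Iall : Integrable (fun p : ℝ × ℝ => EZ + ((p.1 + p.2) / 2) ^ 2) (μ.prod μ) := by
    rw [feq]; exact (integrable_const EZ).add Isum
  have hnn : 0 ≤ᵐ[μ.prod μ] fun p : ℝ × ℝ => EZ + ((p.1 + p.2) / 2) ^ 2 :=
    Filter.Eventually.of_forall fun p => add_nonneg hEZ0 (sq_nonneg _)
  have step3 : ∫⁻ p, ENNReal.ofReal (EZ + ((p.1 + p.2) / 2) ^ 2) ∂(μ.prod μ)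
      = ENNReal.ofReal (∫ p, EZ + ((p.1 + p.2) / 2) ^ 2 ∂(μ.prod μ)) :=
    (ofReal_integral_eq_lintegral_ofReal Iall hnn).symm
  -- compute the Bochner integral over the product
  have hval : (∫ p, EZ + ((p.1 + p.2) / 2) ^ 2 ∂(μ.prod μ))
      = EZ + q ^ 2 / 2 + (1 / 2) * ∫ x, x ^ 2 ∂μ := by
    rw [feq, integral_add (integrable_const EZ) Isum, integral_const]
    have e2 : ∫ p : ℝ × ℝ, (1 / 4 : ℝ) * (p.1 ^ 2 * 1)
        + (1 / 2) * (p.1 * p.2) + (1 / 4) * (1 * p.2 ^ 2) ∂(μ.prod μ)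
        = (1 / 4) * (∫ p : ℝ × ℝ, p.1 ^ 2 * 1 ∂(μ.prod μ))
          + (1 / 2) * (∫ p : ℝ × ℝ, p.1 * p.2 ∂(μ.prod μ))
          + (1 / 4) * (∫ p : ℝ × ℝ, 1 * p.2 ^ 2 ∂(μ.prod μ)) := by
      have I1 : Integrable (fun p : ℝ × ℝ => (1 / 4 : ℝ) * (p.1 ^ 2 * 1)) (μ.prod μ) :=
        Ia.const_mul _
      have I2 : Integrable (fun p : ℝ × ℝ => (1 / 2 : ℝ) * (p.1 * p.2)) (μ.prod μ) :=
        Ib.const_mul _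
      have I3 : Integrable (fun p : ℝ × ℝ => (1 / 4 : ℝ) * (1 * p.2 ^ 2)) (μ.prod μ) :=
        Ic.const_mul _
      have I12 : Integrable (fun p : ℝ × ℝ => (1 / 4 : ℝ) * (p.1 ^ 2 * 1)
          + (1 / 2 : ℝ) * (p.1 * p.2)) (μ.prod μ) := I1.add I2
      rw [integral_add I12 I3, integral_add I1 I2,
        integral_const_mul, integral_const_mul, integral_const_mul]
    rw [e2, integral_prod_mul (fun x : ℝ => x ^ 2) (fun _ : ℝ => (1:ℝ)),
      integral_prod_mul (fun x : ℝ => x) (fun x : ℝ => x),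
      integral_prod_mul (fun _ : ℝ => (1:ℝ)) (fun x : ℝ => x ^ 2)]
    simp [hq, measure_univ]
    ring
  -- put everything together
  have hlin : ∫⁻ z, ENNReal.ofReal (z ^ 2) ∂(Pop K μ)
      = ENNReal.ofReal (EZ + q ^ 2 / 2 + (1 / 2) * ∫ x, x ^ 2 ∂μ) := by
    rw [step1]
    calc ∫⁻ p, ∫⁻ z, ENNReal.ofReal (z ^ 2) ∂(K p.1 p.2) ∂(μ.prod μ)
        = ∫⁻ p, ENNReal.ofReal (EZ + ((p.1 + p.2) / 2) ^ 2) ∂(μ.prod μ) := by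
          exact lintegral_congr fun p => step2 p
      _ = ENNReal.ofReal (∫ p, EZ + ((p.1 + p.2) / 2) ^ 2 ∂(μ.prod μ)) := step3
      _ = ENNReal.ofReal (EZ + q ^ 2 / 2 + (1 / 2) * ∫ x, x ^ 2 ∂μ) := by rw [hval]
  have hfin : (∫ z, z ^ 2 ∂(Pop K μ))
      = EZ + q ^ 2 / 2 + (1 / 2) * ∫ x, x ^ 2 ∂μ := by
    rw [integral_eq_lintegral_of_nonneg_ae
      (Filter.Eventually.of_forall fun z => sq_nonneg z)
      ((measurable_id.pow_const 2).aestronglyMeasurable), hlin,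
      ENNReal.toReal_ofReal]
    positivity
  rw [hfin]

end
end

section
/- Let h be a probability density supported in [0,1] with ∫_0^1 x h(x) dx = 1/2, and assume the support of h contains an interval (0, ε) for some ε > 0 (i.e. h > 0 a.e. on (0,ε)). Then for all α, β > 0, ∫_0^∞ |h(z/α)·z/α² − h(z/β)·z/β²| dz < 1. -/
open MeasureTheory Filter ENNReal

private lemma tw_qmp {α : ℝ} (hα : 0 < α) :
    MeasureTheory.Measure.QuasiMeasurePreserving (fun z : ℝ => z / α) volume volume := by
  refine ⟨(measurable_id.div_const α), ?_⟩
  have : (fun z : ℝ => z / α) = (· * α⁻¹) := by funext z; rw [div_eq_mul_inv]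
  rw [this, Real.map_volume_mul_right (inv_ne_zero hα.ne')]
  exact Measure.absolutelyContinuous_of_le_smul le_rfl

private lemma tw_abs_min (a b : ℝ) : |a - b| = a + b - 2 * min a b := by
  rcases le_total a b with hab | hab
  · rw [abs_of_nonpos (by linarith), min_eq_left hab]; ring
  · rw [abs_of_nonneg (by linarith), min_eq_right hab]; ring

section Aux

variable {h : ℝ → ℝ}

private lemma tw_F_nonneg (hnonneg : ∀ z, 0 ≤ h z)
    (hsupp : ∀ z, z ∉ Set.Icc (0:ℝ) 1 → h z = 0) {α : ℝ} (hα : 0 < α) (z : ℝ) :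
    0 ≤ h (z / α) * z / α ^ 2 := by
  rcases le_or_gt 0 z with hz | hz
  · have := hnonneg (z / α)
    positivity
  · have : h (z / α) = 0 := by
      apply hsupp
      intro hc
      have := hc.1
      nlinarith [div_neg_of_neg_of_pos hz hα]
    simp [this]

private lemma tw_g_integrable (hmeas : Measurable h)
    (hnonneg : ∀ z, 0 ≤ h z)
    (hsupp : ∀ z, z ∉ Set.Icc (0:ℝ) 1 → h z = 0) (hIntegrable : Integrable h volume) :
    Integrable (fun z => z * h z) volume := by
  refine hIntegrable.mono (measurable_id.mul hmeas).aestronglyMeasurable ?_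
  refine Filter.Eventually.of_forall fun z => ?_
  rcases Classical.em (z ∈ Set.Icc (0:ℝ) 1) with hz | hz
  · simp only [Real.norm_eq_abs]
    rw [abs_of_nonneg (mul_nonneg hz.1 (hnonneg z)), abs_of_nonneg (hnonneg z)]
    nlinarith [hnonneg z, hz.1, hz.2]
  · simp [hsupp z hz]

private lemma tw_F_integrable (hmeas : Measurable h)
    (hnonneg : ∀ z, 0 ≤ h z)
    (hsupp : ∀ z, z ∉ Set.Icc (0:ℝ) 1 → h z = 0) (hIntegrable : Integrable h volume)
    {α : ℝ} (hα : 0 < α) :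
    Integrable (fun z => h (z / α) * z / α ^ 2) volume := by
  have hg := tw_g_integrable hmeas hnonneg hsupp hIntegrable
  have := (hg.comp_div hα.ne').const_mul (1 / α)
  refine this.congr (Filter.Eventually.of_forall fun z => ?_)
  field_simp

private lemma tw_F_integral (hmeas : Measurable h)
    (hnonneg : ∀ z, 0 ≤ h z)
    (hsupp : ∀ z, z ∉ Set.Icc (0:ℝ) 1 → h z = 0) (hIntegrable : Integrable h volume)
    (hmean : (∫ z, z * h z) = 1 / 2) {α : ℝ} (hα : 0 < α) :
    (∫ z, h (z / α) * z / α ^ 2) = 1 / 2 := by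
  have key : (fun z => h (z / α) * z / α ^ 2) =
      fun z => (1 / α) * ((z / α) * h (z / α)) := by
    funext z; field_simp
  rw [key, integral_const_mul, MeasureTheory.Measure.integral_comp_div (fun x => x * h x) α,
    abs_of_pos hα, hmean]
  simp only [smul_eq_mul]
  field_simp

end Aux

/-- Tjon–Wu kernel: verification of the contraction
condition.  Let `h` be a probability density supported in `[0,1]` with
`∫_0^1 x h(x) dx = 1/2`, positive a.e. on some interval `(0,ε)`.  Then for
all `α, β > 0`, `∫_0^∞ |h(z/α) z/α² − h(z/β) z/β²| dz < 1`. -/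
theorem tjon_wu_contraction_condition
    (h : ℝ → ℝ) (hmeas : Measurable h) (hnonneg : ∀ z, 0 ≤ h z)
    (hsupp : ∀ z, z ∉ Set.Icc (0:ℝ) 1 → h z = 0)
    (hint : (∫ z, h z) = 1) (hIntegrable : Integrable h volume)
    (hmean : (∫ z, z * h z) = 1 / 2)
    (ε : ℝ) (hε : 0 < ε)
    (hpos : ∀ᵐ z ∂(volume : Measure ℝ), z ∈ Set.Ioo 0 ε → 0 < h z) :
    ∀ α β : ℝ, 0 < α → 0 < β →
      (∫ z in Set.Ioi (0:ℝ),
        |h (z / α) * z / α ^ 2 - h (z / β) * z / β ^ 2|) < 1 := by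
  intro α β hα hβ
  set F : ℝ → ℝ → ℝ := fun a z => h (z / a) * z / a ^ 2 with hF
  have hFnn : ∀ (a : ℝ), 0 < a → ∀ z, 0 ≤ F a z := fun a ha z =>
    tw_F_nonneg hnonneg hsupp ha z
  have hFint : ∀ (a : ℝ), 0 < a → Integrable (F a) volume := fun a ha =>
    tw_F_integrable hmeas hnonneg hsupp hIntegrable ha
  have hFval : ∀ (a : ℝ), 0 < a → (∫ z, F a z) = 1 / 2 := fun a ha =>
    tw_F_integral hmeas hnonneg hsupp hIntegrable hmean ha
  -- integrability of the min
  have hminmeas : Measurable (fun z => min (F α z) (F β z)) := by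
    apply Measurable.min
    · exact ((hmeas.comp (measurable_id.div_const α)).mul measurable_id).div_const _
    · exact ((hmeas.comp (measurable_id.div_const β)).mul measurable_id).div_const _
  have hminint : Integrable (fun z => min (F α z) (F β z)) volume := by
    refine (hFint α hα).mono hminmeas.aestronglyMeasurable ?_
    refine Filter.Eventually.of_forall fun z => ?_
    simp only [Real.norm_eq_abs]
    rw [abs_of_nonneg (le_min (hFnn α hα z) (hFnn β hβ z)),
      abs_of_nonneg (hFnn α hα z)]
    exact min_le_left _ _
  -- the min has positive integral
  have hminpos : 0 < ∫ z, min (F α z) (F β z) := by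
    set δ : ℝ := min (α * ε) (β * ε) with hδ
    have hδpos : 0 < δ := lt_min (by positivity) (by positivity)
    have haeα : ∀ᵐ z ∂(volume : Measure ℝ), z / α ∈ Set.Ioo 0 ε → 0 < h (z / α) :=
      (tw_qmp hα).ae hpos
    have haeβ : ∀ᵐ z ∂(volume : Measure ℝ), z / β ∈ Set.Ioo 0 ε → 0 < h (z / β) :=
      (tw_qmp hβ).ae hpos
    have hae : ∀ᵐ z ∂(volume : Measure ℝ), z ∈ Set.Ioo 0 δ →
        0 < min (F α z) (F β z) := by
      filter_upwards [haeα, haeβ] with z h1 h2 hz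
      have hz1 : (0:ℝ) < z := hz.1
      have hzα : z / α ∈ Set.Ioo 0 ε :=
        ⟨by positivity, (div_lt_iff₀ hα).2 (by rw [mul_comm]; exact hz.2.trans_le (min_le_left _ _))⟩
      have hzβ : z / β ∈ Set.Ioo 0 ε :=
        ⟨by positivity, (div_lt_iff₀ hβ).2 (by rw [mul_comm]; exact hz.2.trans_le (min_le_right _ _))⟩
      have p1 := h1 hzα
      have p2 := h2 hzβ
      refine lt_min ?_ ?_ <;> · simp only [hF]; positivity
    have hsub : 0 < ∫ z in Set.Ioo 0 δ, min (F α z) (F β z) := by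
      rw [setIntegral_pos_iff_support_of_nonneg_ae
        (Filter.Eventually.of_forall fun z => le_min (hFnn α hα z) (hFnn β hβ z)
          : 0 ≤ᵐ[volume.restrict (Set.Ioo 0 δ)] _)
        hminint.integrableOn]
      have hnull : volume (Set.Ioo (0:ℝ) δ \
          Function.support fun z => min (F α z) (F β z)) = 0 := by
        refine measure_mono_null ?_ (ae_iff.1 hae)
        intro z hz
        simp only [Set.mem_diff, Function.mem_support, not_not] at hz
        simp only [Set.mem_setOf_eq]
        intro hcon
        exact absurd (hcon hz.1) (by rw [hz.2]; exact lt_irrefl 0)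
      have : volume (Set.Ioo (0:ℝ) δ) ≤
          volume ((Function.support fun z => min (F α z) (F β z)) ∩ Set.Ioo 0 δ) := by
        calc volume (Set.Ioo (0:ℝ) δ)
            ≤ volume ((Function.support fun z => min (F α z) (F β z)) ∩ Set.Ioo 0 δ)
              + volume (Set.Ioo (0:ℝ) δ \
                Function.support fun z => min (F α z) (F β z)) := by
              refine (measure_mono ?_).trans (measure_union_le _ _)
              intro z hz
              rcases Classical.em (z ∈ Function.support fun z => min (F α z) (F β z)) with hs | hs
              · exact Or.inl ⟨hs, hz⟩
              · exact Or.inr ⟨hz, hs⟩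
          _ = volume ((Function.support fun z => min (F α z) (F β z)) ∩ Set.Ioo 0 δ) := by
              rw [hnull, add_zero]
      refine lt_of_lt_of_le ?_ this
      rw [Real.volume_Ioo]
      simp only [sub_zero]
      exact ENNReal.ofReal_pos.2 hδpos
    calc (0:ℝ) < ∫ z in Set.Ioo 0 δ, min (F α z) (F β z) := hsub
      _ ≤ ∫ z, min (F α z) (F β z) := by
          refine setIntegral_le_integral hminint ?_
          exact Filter.Eventually.of_forall fun z => le_min (hFnn α hα z) (hFnn β hβ z)
  -- convert the set integral to a full integral
  have hzero : ∀ z : ℝ, z ∉ Set.Ioi (0:ℝ) → |F α z - F β z| = 0 := by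
    intro z hz
    simp only [Set.mem_Ioi, not_lt] at hz
    have e1 : F α z = 0 := by
      rcases eq_or_lt_of_le hz with rfl | hz'
      · simp [hF]
      · have : h (z / α) = 0 := hsupp _ (by
          intro hc; nlinarith [hc.1, div_neg_of_neg_of_pos hz' hα])
        simp [hF, this]
    have e2 : F β z = 0 := by
      rcases eq_or_lt_of_le hz with rfl | hz'
      · simp [hF]
      · have : h (z / β) = 0 := hsupp _ (by
          intro hc; nlinarith [hc.1, div_neg_of_neg_of_pos hz' hβ])
        simp [hF, this]
    simp [e1, e2]
  rw [setIntegral_eq_integral_of_forall_compl_eq_zero hzero]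
  have hid : ∀ z, |F α z - F β z| = F α z + F β z - 2 * min (F α z) (F β z) :=
    fun z => tw_abs_min _ _
  calc (∫ z, |F α z - F β z|)
      = ∫ z, (F α z + F β z - 2 * min (F α z) (F β z)) := by
        exact integral_congr_ae (Filter.Eventually.of_forall hid)
    _ = (∫ z, F α z) + (∫ z, F β z) - 2 * ∫ z, min (F α z) (F β z) := by
        have h1 : Integrable (fun z => F α z + F β z) volume := (hFint α hα).add (hFint β hβ)
        rw [integral_sub h1 (hminint.const_mul 2),
          integral_add (hFint α hα) (hFint β hβ), integral_const_mul]
    _ = 1 - 2 * ∫ z, min (F α z) (F β z) := by rw [hFval α hα, hFval β hβ]; ring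
    _ < 1 := by linarith
end

section
/- Let Z be a random variable with values in [0,1] having a density h with E Z = ∫_0^1 x h(x) dx = 1/2, and let K(x,y,·) be the law of (x+y)·Z, i.e. K(x,y,dz) = (x+y)^{−1} h(z/(x+y)) dz on [0, x+y]. Then for every Borel probability measure μ on [0,∞) with finite second moment and first moment q, ∫_0^∞ z² (𝒫μ)(dz) ≤ 2q² E Z² + 2 E Z² ∫_0^∞ y² μ(dy); moreover L := 2 E Z² < 1, so condition (ii) of the asymptotic stability theorem holds with α = 2, C = 2q² E Z² and L = 2 E Z². -/
open MeasureTheory Filter ENNReal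

noncomputable section

lemma measurable_scaled_map (ν : Measure ℝ) [SFinite ν] :
    Measurable fun c : ℝ => ν.map (fun z => c * z) := by
  rw [Measure.measurable_measure]
  intro s hs
  have key : ∀ c : ℝ, (ν.map (fun z => c * z)) s
      = ∫⁻ z, s.indicator (1 : ℝ → ℝ≥0∞) (c * z) ∂ν := by
    intro c
    rw [Measure.map_apply (measurable_const_mul c) hs]
    rw [← lintegral_indicator_one (measurable_const_mul c hs)]
    refine lintegral_congr fun z => ?_
    by_cases hz : c * z ∈ s <;> simp [Set.indicator, hz]
  simp only [key]
  exact Measurable.lintegral_prod_right'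
    ((measurable_one.indicator hs).comp (measurable_fst.mul measurable_snd))

/-- Tjon–Wu kernel: second-moment bound.  Let `Z ∈ [0,1]`
have density `h` with `E Z = 1/2`, and let `K(x,y,·)` be the law of
`(x+y)Z`.  Then for every Borel probability measure `μ` on `[0,∞)` with
finite second moment and first moment `q`,
`∫ z² (𝒫μ)(dz) ≤ 2q² E Z² + 2 E Z² ∫ y² μ(dy)`; moreover `L := 2 E Z² < 1`,
so condition (ii) of the asymptotic stability theorem holds with `α = 2`,
`C = 2q² E Z²` and `L = 2 E Z²`. -/
theorem tjon_wu_second_moment_bound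
    (h : ℝ → ℝ) (hmeas : Measurable h) (hnonneg : ∀ z, 0 ≤ h z)
    (hsupp : ∀ z, z ∉ Set.Icc (0:ℝ) 1 → h z = 0)
    (hint : (∫ z, h z) = 1) (hIntegrable : Integrable h volume)
    (hmean : (∫ z, z * h z) = 1 / 2)
    (K : ℝ → ℝ → Measure ℝ)
    (hK : ∀ x y, K x y =
      (volume.withDensity (fun z => ENNReal.ofReal (h z))).map
        (fun z => (x + y) * z))
    (q : ℝ) :
    2 * (∫ z, z ^ 2 * h z) < 1 ∧
    ∀ μ : Measure ℝ, IsProbabilityMeasure μ → μ (Set.Iio (0:ℝ)) = 0 →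
      Integrable (fun z => z) μ → Integrable (fun z => z ^ 2) μ →
      (∫ z, z ∂μ) = q →
      (∫ z, z ^ 2 ∂(Pop K μ))
        ≤ 2 * q ^ 2 * (∫ z, z ^ 2 * h z)
          + 2 * (∫ z, z ^ 2 * h z) * ∫ y, y ^ 2 ∂μ := by
  -- basic integrability facts
  have hzh_int : Integrable (fun z => z * h z) volume := by
    refine hIntegrable.mono ((measurable_id.mul hmeas).aestronglyMeasurable)
      (ae_of_all _ fun z => ?_)
    by_cases hz : z ∈ Set.Icc (0:ℝ) 1
    · obtain ⟨h0, h1⟩ := hz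
      rw [Real.norm_eq_abs, Real.norm_eq_abs, abs_mul, abs_of_nonneg h0,
        abs_of_nonneg (hnonneg z)]
      nlinarith [hnonneg z]
    · simp [hsupp z hz]
  have hz2h_int : Integrable (fun z => z ^ 2 * h z) volume := by
    refine hIntegrable.mono (((measurable_id.pow_const 2).mul hmeas).aestronglyMeasurable)
      (ae_of_all _ fun z => ?_)
    by_cases hz : z ∈ Set.Icc (0:ℝ) 1
    · obtain ⟨h0, h1⟩ := hz
      rw [Real.norm_eq_abs, Real.norm_eq_abs, abs_mul, abs_of_nonneg (sq_nonneg z),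
        abs_of_nonneg (hnonneg z)]
      nlinarith [hnonneg z, mul_nonneg (mul_nonneg h0 h0) (hnonneg z),
        mul_nonneg (mul_nonneg h0 (sub_nonneg.2 h1)) (hnonneg z),
        mul_nonneg (sub_nonneg.2 h1) (hnonneg z)]
    · simp [hsupp z hz]
  set m2 := ∫ z, z ^ 2 * h z with hm2def
  have hm2_nonneg : 0 ≤ m2 :=
    integral_nonneg fun z => mul_nonneg (sq_nonneg z) (hnonneg z)
  -- Part 1 : 2 * m2 < 1
  have part1 : 2 * m2 < 1 := by
    set g : ℝ → ℝ := fun z => z * h z - z ^ 2 * h z with hgdef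
    have hg_int : Integrable g volume := hzh_int.sub hz2h_int
    have hg_nonneg : ∀ z, 0 ≤ g z := by
      intro z
      by_cases hz : z ∈ Set.Icc (0:ℝ) 1
      · obtain ⟨h0, h1⟩ := hz
        have := hnonneg z
        simp only [hgdef]
        nlinarith [mul_nonneg (mul_nonneg h0 (sub_nonneg.2 h1)) (hnonneg z)]
      · simp [hgdef, hsupp z hz]
    have hg_val : ∫ z, g z = 1 / 2 - m2 := by
      rw [hgdef]
      rw [integral_sub hzh_int hz2h_int, hmean]
    have hg_pos : 0 < ∫ z, g z := by
      rcases lt_or_eq_of_le (integral_nonneg (f := g) hg_nonneg) with hpos | hzero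
      · exact hpos
      · exfalso
        have hg0 : g =ᵐ[volume] 0 :=
          (integral_eq_zero_iff_of_nonneg hg_nonneg hg_int).1 hzero.symm
        have h01 : ∀ᵐ z : ℝ ∂volume, z ∉ ({0, 1} : Set ℝ) := by
          rw [← measure_eq_zero_iff_ae_notMem]
          exact Set.Finite.measure_zero (Set.toFinite _) volume
        have hh0 : h =ᵐ[volume] 0 := by
          filter_upwards [hg0, h01] with z hz hz01
          simp only [Set.mem_insert_iff, Set.mem_singleton_iff, not_or] at hz01
          by_cases hzIcc : z ∈ Set.Icc (0:ℝ) 1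
          · obtain ⟨h0, h1⟩ := hzIcc
            have hz0 : (0:ℝ) < z := lt_of_le_of_ne h0 (Ne.symm hz01.1)
            have hz1 : z < 1 := lt_of_le_of_ne h1 hz01.2
            simp only [hgdef, Pi.zero_apply] at hz
            have : z * (1 - z) * h z = 0 := by nlinarith
            have hne : z * (1 - z) ≠ 0 := ne_of_gt (by nlinarith)
            simpa [hne] using mul_eq_zero.1 this
          · simp [hsupp z hzIcc]
        have : (∫ z, h z) = 0 := integral_eq_zero_of_ae hh0
        rw [hint] at this
        norm_num at this
    rw [hg_val] at hg_pos
    linarith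
  refine ⟨part1, ?_⟩
  intro μ hprob hIio hμ1 hμ2 hq
  haveI : IsProbabilityMeasure μ := hprob
  set ν := volume.withDensity fun z => ENNReal.ofReal (h z) with hνdef
  have hν_prob : IsProbabilityMeasure ν := by
    constructor
    rw [hνdef, withDensity_apply _ MeasurableSet.univ, Measure.restrict_univ,
      ← ofReal_integral_eq_lintegral_ofReal hIntegrable (ae_of_all _ hnonneg), hint]
    norm_num
  haveI := hν_prob
  have hmz2 : Measurable fun z : ℝ => ENNReal.ofReal (z ^ 2) :=
    (measurable_id.pow_const 2).ennreal_ofReal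
  have hM : ∫⁻ z, ENNReal.ofReal (z ^ 2) ∂ν = ENNReal.ofReal m2 := by
    rw [hνdef, lintegral_withDensity_eq_lintegral_mul _ hmeas.ennreal_ofReal hmz2]
    rw [ofReal_integral_eq_lintegral_ofReal hz2h_int
      (ae_of_all _ fun z => mul_nonneg (sq_nonneg z) (hnonneg z))]
    refine lintegral_congr fun z => ?_
    simp only [Pi.mul_apply]
    rw [← ENNReal.ofReal_mul (hnonneg z), mul_comm]
  have hinner : ∀ c : ℝ, ∫⁻ z, ENNReal.ofReal (z ^ 2) ∂(ν.map (fun z => c * z))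
      = ENNReal.ofReal (c ^ 2) * ENNReal.ofReal m2 := by
    intro c
    rw [lintegral_map hmz2 (measurable_const_mul c)]
    have : ∀ z : ℝ, ENNReal.ofReal ((c * z) ^ 2)
        = ENNReal.ofReal (c ^ 2) * ENNReal.ofReal (z ^ 2) := by
      intro z
      rw [mul_pow, ENNReal.ofReal_mul (sq_nonneg c)]
    simp only [this]
    rw [lintegral_const_mul _ hmz2, hM]
  -- integrability on the product
  have hx2p : Integrable (fun p : ℝ × ℝ => p.1 ^ 2) (μ.prod μ) := by
    have := hμ2.mul_prod (integrable_const (1:ℝ) (μ := μ))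
    simpa using this
  have hy2p : Integrable (fun p : ℝ × ℝ => p.2 ^ 2) (μ.prod μ) := by
    have := (integrable_const (1:ℝ) (μ := μ)).mul_prod hμ2
    simpa using this
  have hxyp : Integrable (fun p : ℝ × ℝ => p.1 * p.2) (μ.prod μ) := hμ1.mul_prod hμ1
  have hexp : (fun p : ℝ × ℝ => (p.1 + p.2) ^ 2)
      = fun p : ℝ × ℝ => p.1 ^ 2 + 2 * (p.1 * p.2) + p.2 ^ 2 := by
    funext p; ring
  have hGint : Integrable (fun p : ℝ × ℝ => (p.1 + p.2) ^ 2) (μ.prod μ) := by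
    rw [hexp]
    exact (hx2p.add (hxyp.const_mul 2)).add hy2p
  -- compute I := ∫ (x+y)^2 d(μ⊗μ)
  have hfst : ∫ p : ℝ × ℝ, p.1 ^ 2 ∂(μ.prod μ) = ∫ x, x ^ 2 ∂μ := by
    have h1 := integral_prod_mul (μ := μ) (ν := μ) (fun x : ℝ => x ^ 2) (fun _ : ℝ => (1:ℝ))
    simpa using h1
  have hsnd : ∫ p : ℝ × ℝ, p.2 ^ 2 ∂(μ.prod μ) = ∫ x, x ^ 2 ∂μ := by
    have h1 := integral_prod_mul (μ := μ) (ν := μ) (fun _ : ℝ => (1:ℝ)) (fun x : ℝ => x ^ 2)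
    simpa using h1
  have hxy : ∫ p : ℝ × ℝ, p.1 * p.2 ∂(μ.prod μ) = q ^ 2 := by
    have h1 := integral_prod_mul (μ := μ) (ν := μ) (fun x : ℝ => x) (fun x : ℝ => x)
    rw [hq] at h1
    rw [h1]; ring
  have hsum1 : Integrable (fun p : ℝ × ℝ => p.1 ^ 2 + 2 * (p.1 * p.2)) (μ.prod μ) :=
    hx2p.add (hxyp.const_mul 2)
  have hI : ∫ p : ℝ × ℝ, (p.1 + p.2) ^ 2 ∂(μ.prod μ)
      = 2 * q ^ 2 + 2 * ∫ x, x ^ 2 ∂μ := by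
    rw [hexp, integral_add hsum1 hy2p,
      integral_add hx2p (hxyp.const_mul 2), integral_const_mul, hfst, hsnd, hxy]
    ring
  have hI_nonneg : 0 ≤ ∫ p : ℝ × ℝ, (p.1 + p.2) ^ 2 ∂(μ.prod μ) :=
    integral_nonneg fun p => sq_nonneg _
  -- the bind computation
  have hPop : Pop K μ = (μ.prod μ).bind fun p => ν.map (fun z => (p.1 + p.2) * z) := by
    unfold Pop
    congr 1
    funext p
    rw [hK p.1 p.2]
  have hmeask : Measurable fun p : ℝ × ℝ => ν.map (fun z => (p.1 + p.2) * z) :=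
    (measurable_scaled_map ν).comp (measurable_fst.add measurable_snd)
  have hlint : ∫⁻ z, ENNReal.ofReal (z ^ 2) ∂(Pop K μ)
      = ENNReal.ofReal (2 * q ^ 2 + 2 * ∫ x, x ^ 2 ∂μ) * ENNReal.ofReal m2 := by
    rw [hPop, Measure.lintegral_bind hmeask.aemeasurable hmz2.aemeasurable]
    simp only [hinner]
    rw [lintegral_mul_const (f := fun a : ℝ × ℝ => ENNReal.ofReal ((a.1 + a.2) ^ 2)) _ ((measurable_fst.add measurable_snd).pow_const 2).ennreal_ofReal]
    rw [← ofReal_integral_eq_lintegral_ofReal hGint (ae_of_all _ fun p => sq_nonneg _), hI]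
  have hLHS : ∫ z, z ^ 2 ∂(Pop K μ)
      = (2 * q ^ 2 + 2 * ∫ x, x ^ 2 ∂μ) * m2 := by
    rw [integral_eq_lintegral_of_nonneg_ae (ae_of_all _ fun z => sq_nonneg z)
      ((measurable_id.pow_const 2).aestronglyMeasurable), hlint,
      ← ENNReal.ofReal_mul (by rw [← hI]; exact hI_nonneg)]
    rw [ENNReal.toReal_ofReal]
    have h2 : 0 ≤ ∫ x, x ^ 2 ∂μ := integral_nonneg fun x => sq_nonneg x
    positivity
  rw [hLHS]
  have : (∫ y, y ^ 2 ∂μ) = ∫ x, x ^ 2 ∂μ := rfl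
  rw [this]
  nlinarith [hm2_nonneg]
end
end
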